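/- arXiv:math/0507281 — 5 statements merged into one kernel-verified Lean document; each statement's English description precedes it below -/
import Mathlib

section
/- Let n ≥ 4 be an integer and let r_1, …, r_n be real numbers with 0 < r_i < π for all i. Then Σ_{k=1}^∞ (sin(k r_1)⋯sin(k r_n))/k^{n−2} ≥ 0. -/
open Real Finset

lemma summable_invsq : Summable (fun k : ℕ => 1/((k:ℝ)+1)^2) := by
  have := Real.summable_one_div_nat_pow.mpr (le_refl 2)
  have h := (summable_nat_add_iff 1).mpr this
  simpa using h

noncomputable def sphC (u : ℝ) : ℝ := ∑' k : ℕ, Real.cos (((k:ℝ)+1) * u) / ((k:ℝ)+1)^2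

lemma summable_sphC (u : ℝ) : Summable (fun k : ℕ => Real.cos (((k:ℝ)+1) * u) / ((k:ℝ)+1)^2) := by
  apply Summable.of_norm_bounded summable_invsq
  intro k
  have hk : (0:ℝ) < ((k:ℝ)+1) := by positivity
  rw [norm_div, norm_pow, Real.norm_eq_abs, Real.norm_eq_abs, abs_of_pos hk]
  gcongr
  exact Real.abs_cos_le_one _

lemma sphC_even (u : ℝ) : sphC (-u) = sphC u := by
  unfold sphC
  apply tsum_congr; intro k
  rw [mul_neg, Real.cos_neg]

lemma sphC_per (u : ℝ) : sphC (u + 2*π) = sphC u := by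
  unfold sphC
  apply tsum_congr; intro k
  have : ((k:ℝ)+1) * (u + 2*π) = ((k:ℝ)+1)*u + ((k+1:ℕ):ℝ)*(2*π) := by push_cast; ring
  rw [this, Real.cos_add_nat_mul_two_pi]

lemma sphC_eval {u : ℝ} (h0 : 0 ≤ u) (h2 : u ≤ 2*π) :
    sphC u = π^2/6 - π*u/2 + u^2/4 := by
  have hpi := Real.pi_pos
  have hx : u/(2*π) ∈ Set.Icc (0:ℝ) 1 := by
    constructor
    · positivity
    · rw [div_le_one (by positivity)]; exact h2
  have H := hasSum_one_div_nat_pow_mul_cos (k := 1) one_ne_zero hx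
  have hb : (Polynomial.map (algebraMap ℚ ℝ) (Polynomial.bernoulli 2)).eval (u/(2*π))
      = (u/(2*π))^2 - (u/(2*π)) + 1/6 := by
    have h2' : bernoulli 2 = 1/6 := by
      rw [bernoulli_eq_bernoulli'_of_ne_one (by norm_num), bernoulli'_two]
    simp [Polynomial.bernoulli, Finset.sum_range_succ, Polynomial.eval_finset_sum, h2']
    ring
  rw [show 2*1 = 2 from rfl] at H
  have H2 := (hasSum_nat_add_iff' (f := fun n : ℕ => 1 / (n : ℝ) ^ 2 * Real.cos (2 * π * n * (u/(2*π)))) 1).mpr H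
  have heq : (fun k : ℕ => 1 / ((k+1 : ℕ) : ℝ) ^ 2 * Real.cos (2 * π * ((k+1:ℕ):ℝ) * (u/(2*π))))
      = fun k : ℕ => Real.cos (((k:ℝ)+1) * u) / ((k:ℝ)+1)^2 := by
    funext k
    have : 2 * π * ((k+1:ℕ):ℝ) * (u/(2*π)) = ((k:ℝ)+1) * u := by
      push_cast; field_simp
    rw [this]
    push_cast
    ring
  rw [heq] at H2
  have := H2.tsum_eq
  rw [sphC, this]
  simp only [hb]
  rw [Finset.range_one, Finset.sum_singleton]
  norm_num
  field_simp
  ring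

noncomputable def sphP (c x : ℝ) : ℝ := π^2/3 - π*(c+x)/2 - π*|c-x|/2 + (c^2+x^2)/2

lemma abs_key {d v x y : ℝ} (h1 : d ≤ v) (h2 : x ≤ y) :
    |d-x| + |v-y| ≤ |d-y| + |v-x| := by
  rcases abs_cases (d-x) with ⟨e1,f1⟩|⟨e1,f1⟩ <;> rcases abs_cases (v-y) with ⟨e2,f2⟩|⟨e2,f2⟩ <;>
    rw [e1, e2] <;>
    [linarith [le_abs_self (d-y), le_abs_self (v-x)];
     linarith [neg_abs_le (d-y), le_abs_self (v-x)];
     linarith [neg_abs_le (d-y), le_abs_self (v-x)];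
     linarith [neg_abs_le (d-y), neg_abs_le (v-x)]]

lemma sphP_mono {d v x y : ℝ} (hdv : d ≤ v) (hxy : x ≤ y) :
    sphP d y - sphP v y ≤ sphP d x - sphP v x := by
  have h := mul_le_mul_of_nonneg_left (abs_key hdv hxy) (by positivity : (0:ℝ) ≤ π/2)
  unfold sphP
  linarith [h]

lemma sphC_pair {c x : ℝ} (hc0 : 0 ≤ c) (hcπ : c ≤ π) (hx0 : 0 ≤ x) (hxπ : x ≤ π) :
    sphC (c+x) + sphC (c-x) = sphP c x := by
  have hpi := Real.pi_pos
  have h1 : sphC (c+x) = π^2/6 - π*(c+x)/2 + (c+x)^2/4 :=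
    sphC_eval (by linarith) (by linarith)
  have h2 : sphC (c-x) = π^2/6 - π*|c-x|/2 + (c-x)^2/4 := by
    rcases le_or_gt x c with h|h
    · rw [abs_of_nonneg (by linarith)]
      exact sphC_eval (by linarith) (by linarith)
    · rw [abs_of_neg (by linarith), show c - x = -(x-c) from by ring, sphC_even]
      have := sphC_eval (u := x-c) (by linarith) (by linarith)
      rw [this]; ring
  rw [h1, h2]; unfold sphP; ring

lemma sphC_pairD {w x : ℝ} (hw : -π ≤ w) (hw2 : w ≤ π) (hx0 : 0 ≤ x) (hxπ : x ≤ π) :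
    sphC (w+x) + sphC (w-x) = sphP |w| x := by
  rcases le_or_gt 0 w with h|h
  · rw [abs_of_nonneg h]; exact sphC_pair h hw2 hx0 hxπ
  · rw [abs_of_neg h]
    have e1 : sphC (w+x) = sphC (-w-x) := by
      rw [show w + x = -(-w-x) from by ring, sphC_even]
    have e2 : sphC (w-x) = sphC (-w+x) := by
      rw [show w - x = -(-w+x) from by ring, sphC_even]
    rw [e1, e2]
    have := sphC_pair (c := -w) (by linarith) (by linarith) hx0 hxπ
    rw [show -w + x = -w - -x from by ring] at this ⊢
    linarith [this]

lemma sphC_pairV {v x : ℝ} (hv : π < v) (hv2 : v ≤ 2*π) (hx0 : 0 ≤ x) (hxπ : x ≤ π) :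
    sphC (v+x) + sphC (v-x) = sphP (2*π - v) x := by
  have hpi := Real.pi_pos
  have e1 : sphC (v+x) = sphC ((2*π-v) - x) := by
    have p1 := sphC_per (v+x-2*π)
    rw [show v+x-2*π+2*π = v+x from by ring] at p1
    rw [p1, show v+x-2*π = -((2*π-v)-x) from by ring, sphC_even]
  have e2 : sphC (v-x) = sphC ((2*π-v) + x) := by
    have p1 := sphC_per (v-x-2*π)
    rw [show v-x-2*π+2*π = v-x from by ring] at p1
    rw [p1, show v-x-2*π = -((2*π-v)+x) from by ring, sphC_even]
  rw [e1, e2]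
  have := sphC_pair (c := 2*π-v) (by linarith) (by linarith) hx0 hxπ
  linarith [this]

noncomputable def sphF (m : ℕ) (r : Fin m → ℝ) (x : ℝ) : ℝ :=
  ∑' k : ℕ, (∏ i, Real.sin (((k:ℝ)+1) * r i)) * Real.cos (((k:ℝ)+1) * x) / ((k:ℝ)+1)^m

lemma sphF_norm_bound {m : ℕ} (hm : 2 ≤ m) (r : Fin m → ℝ) (x : ℝ) (k : ℕ) :
    ‖(∏ i, Real.sin (((k:ℝ)+1) * r i)) * Real.cos (((k:ℝ)+1) * x) / ((k:ℝ)+1)^m‖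
      ≤ 1/((k:ℝ)+1)^2 := by
  have hk : (0:ℝ) < ((k:ℝ)+1) := by positivity
  have hk1 : (1:ℝ) ≤ ((k:ℝ)+1) := by simp
  have hnum : ‖(∏ i, Real.sin (((k:ℝ)+1) * r i)) * Real.cos (((k:ℝ)+1) * x)‖ ≤ 1 := by
    rw [norm_mul]
    have h1 : ‖∏ i, Real.sin (((k:ℝ)+1) * r i)‖ ≤ 1 := by
      rw [Real.norm_eq_abs, Finset.abs_prod]
      apply Finset.prod_le_one
      · intro i _; exact abs_nonneg _
      · intro i _; exact Real.abs_sin_le_one _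
    have h2 : ‖Real.cos (((k:ℝ)+1) * x)‖ ≤ 1 := by
      rw [Real.norm_eq_abs]; exact Real.abs_cos_le_one _
    calc ‖∏ i, Real.sin (((k:ℝ)+1) * r i)‖ * ‖Real.cos (((k:ℝ)+1) * x)‖
        ≤ 1 * 1 := by
          apply mul_le_mul h1 h2 (norm_nonneg _) zero_le_one
      _ = 1 := by ring
  rw [norm_div, norm_pow, Real.norm_eq_abs ((k:ℝ)+1), abs_of_pos hk]
  calc ‖(∏ i, Real.sin (((k:ℝ)+1) * r i)) * Real.cos (((k:ℝ)+1) * x)‖ / ((k:ℝ)+1)^m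
      ≤ 1 / ((k:ℝ)+1)^m := by gcongr
    _ ≤ 1 / ((k:ℝ)+1)^2 := by
        apply one_div_le_one_div_of_le (by positivity)
        exact pow_le_pow_right₀ hk1 hm

lemma summable_sphF {m : ℕ} (hm : 2 ≤ m) (r : Fin m → ℝ) (x : ℝ) :
    Summable (fun k : ℕ =>
      (∏ i, Real.sin (((k:ℝ)+1) * r i)) * Real.cos (((k:ℝ)+1) * x) / ((k:ℝ)+1)^m) :=
  Summable.of_norm_bounded summable_invsq (sphF_norm_bound hm r x)

lemma sphF_even {m : ℕ} (r : Fin m → ℝ) (x : ℝ) : sphF m r (-x) = sphF m r x := by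
  unfold sphF
  apply tsum_congr; intro k
  rw [mul_neg, Real.cos_neg]

lemma sphF_per {m : ℕ} (r : Fin m → ℝ) (x : ℝ) : sphF m r (x + 2*π) = sphF m r x := by
  unfold sphF
  apply tsum_congr; intro k
  have : ((k:ℝ)+1) * (x + 2*π) = ((k:ℝ)+1)*x + ((k+1:ℕ):ℝ)*(2*π) := by push_cast; ring
  rw [this, Real.cos_add_nat_mul_two_pi]

lemma sphF_cont {m : ℕ} (hm : 2 ≤ m) (r : Fin m → ℝ) : Continuous (sphF m r) := by
  apply continuous_tsum (u := fun k : ℕ => 1/((k:ℝ)+1)^2) ?_ summable_invsq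
  · intro k x
    exact sphF_norm_bound hm r x k
  · intro k
    fun_prop

lemma sphF_two_eq (r : Fin 2 → ℝ) (z : ℝ) :
    sphF 2 r z = (sphC (r 0 - r 1 + z) + sphC (r 0 - r 1 - z)
      - sphC (r 0 + r 1 + z) - sphC (r 0 + r 1 - z))/4 := by
  have h1 := (summable_sphC (r 0 - r 1 + z)).hasSum
  have h2 := (summable_sphC (r 0 - r 1 - z)).hasSum
  have h3 := (summable_sphC (r 0 + r 1 + z)).hasSum
  have h4 := (summable_sphC (r 0 + r 1 - z)).hasSum
  have H := (((h1.add h2).sub (h3.add h4)).div_const 4)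
  rw [sphF]
  simp only [sphC]
  rw [sub_sub, ← H.tsum_eq]
  apply tsum_congr; intro k
  have hk : ((k:ℝ)+1) ≠ 0 := by positivity
  rw [Fin.prod_univ_two]
  field_simp
  simp only [mul_add, mul_sub, Real.cos_add, Real.cos_sub, Real.sin_add, Real.sin_sub]
  ring

lemma sphF_two_mono (r : Fin 2 → ℝ) (hr : ∀ i, 0 < r i ∧ r i < π) {x y : ℝ}
    (hx : 0 ≤ x) (hxy : x ≤ y) (hy : y ≤ π) : sphF 2 r y ≤ sphF 2 r x := by
  have hpi := Real.pi_pos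
  obtain ⟨ha0, haπ⟩ := hr 0
  obtain ⟨hb0, hbπ⟩ := hr 1
  set a := r 0
  set b := r 1
  have hx' : x ≤ π := le_trans hxy hy
  have hy' : 0 ≤ y := le_trans hx hxy
  have hDx := sphC_pairD (w := a-b) (by linarith) (by linarith) hx hx'
  have hDy := sphC_pairD (w := a-b) (by linarith) (by linarith) hy' hy
  rw [sphF_two_eq, sphF_two_eq]
  rcases le_or_gt (a+b) π with h|h
  · have hVx := sphC_pair (c := a+b) (by linarith) h hx hx'
    have hVy := sphC_pair (c := a+b) (by linarith) h hy' hy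
    have hle : |a - b| ≤ a + b := by
      rw [abs_le]; constructor <;> linarith
    have := sphP_mono hle hxy
    linarith
  · have hVx := sphC_pairV (v := a+b) h (by linarith) hx hx'
    have hVy := sphC_pairV (v := a+b) h (by linarith) hy' hy
    have hle : |a - b| ≤ 2*π - (a+b) := by
      rw [abs_le]; constructor <;> linarith
    have := sphP_mono hle hxy
    linarith

lemma integral_cos_smul (K : ℝ) (hK : K ≠ 0) (a b : ℝ) :
    ∫ t in a..b, Real.cos (K * t) = (Real.sin (K*b) - Real.sin (K*a))/K := by
  have h := intervalIntegral.mul_integral_comp_mul_left (a := a) (b := b) (c := K)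
    (f := fun u => Real.cos u)
  rw [integral_cos] at h
  field_simp at h ⊢
  exact h

lemma sphF_succ (p : ℕ) (hp : 2 ≤ p) (r : Fin (p+1) → ℝ) (x : ℝ) :
    sphF (p+1) r x
      = (1/2) * ∫ t in (x - r (Fin.last p))..(x + r (Fin.last p)), sphF p (Fin.init r) t := by
  set c := r (Fin.last p) with hc
  have key := intervalIntegral.hasSum_integral_of_dominated_convergence
    (μ := MeasureTheory.volume) (a := x - c) (b := x + c)
    (F := fun (k:ℕ) (t:ℝ) =>
      (∏ i : Fin p, Real.sin (((k:ℝ)+1) * Fin.init r i)) * Real.cos (((k:ℝ)+1)*t) / ((k:ℝ)+1)^p)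
    (f := sphF p (Fin.init r))
    (bound := fun (k:ℕ) (_:ℝ) => 1/((k:ℝ)+1)^2)
    (fun k => (by fun_prop : Continuous (fun t:ℝ =>
      (∏ i : Fin p, Real.sin (((k:ℝ)+1) * Fin.init r i)) * Real.cos (((k:ℝ)+1)*t) / ((k:ℝ)+1)^p)).aestronglyMeasurable)
    (fun k => MeasureTheory.ae_of_all _ (fun t _ => sphF_norm_bound hp (Fin.init r) t k))
    (MeasureTheory.ae_of_all _ (fun t _ => summable_invsq))
    intervalIntegrable_const
    (MeasureTheory.ae_of_all _ (fun t _ => (summable_sphF hp (Fin.init r) t).hasSum))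
  have key2 := (key.div_const 2).tsum_eq
  have heq : (fun k : ℕ =>
      (∫ t in (x - c)..(x + c),
        (∏ i : Fin p, Real.sin (((k:ℝ)+1) * Fin.init r i)) * Real.cos (((k:ℝ)+1)*t) / ((k:ℝ)+1)^p)/2)
      = fun k : ℕ =>
        (∏ i : Fin (p+1), Real.sin (((k:ℝ)+1) * r i)) * Real.cos (((k:ℝ)+1) * x) / ((k:ℝ)+1)^(p+1) := by
    funext k
    have hK : ((k:ℝ)+1) ≠ 0 := by positivity
    have e1 : ∀ t:ℝ, (∏ i : Fin p, Real.sin (((k:ℝ)+1) * Fin.init r i)) * Real.cos (((k:ℝ)+1)*t) / ((k:ℝ)+1)^p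
        = ((∏ i : Fin p, Real.sin (((k:ℝ)+1) * Fin.init r i)) / ((k:ℝ)+1)^p) * Real.cos (((k:ℝ)+1)*t) := by
      intro t; ring
    simp only [e1]
    rw [intervalIntegral.integral_const_mul, integral_cos_smul _ hK]
    rw [Fin.prod_univ_castSucc]
    have e2 : ∀ i : Fin p, r i.castSucc = Fin.init r i := fun i => rfl
    simp only [e2]
    have e3 : Real.sin (((k:ℝ)+1)*(x+c)) - Real.sin (((k:ℝ)+1)*(x-c))
        = 2 * Real.sin (((k:ℝ)+1)*c) * Real.cos (((k:ℝ)+1)*x) := by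
      simp only [mul_add, mul_sub, Real.sin_add, Real.sin_sub]
      ring
    rw [e3]
    field_simp
    ring
  rw [heq] at key2
  rw [sphF, key2]
  ring

lemma sphF_mono (m : ℕ) : ∀ (r : Fin (m+2) → ℝ), (∀ i, 0 < r i ∧ r i < π) →
    ∀ {x y : ℝ}, 0 ≤ x → x ≤ y → y ≤ π → sphF (m+2) r y ≤ sphF (m+2) r x := by
  induction m with
  | zero =>
    intro r hr x y hx hxy hy
    exact sphF_two_mono r hr hx hxy hy
  | succ m ih =>
    intro r hr x y hx hxy hy
    have hpi := Real.pi_pos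
    set c := r (Fin.last (m+2)) with hcdef
    obtain ⟨hc0, hcπ⟩ := hr (Fin.last (m+2))
    set G := sphF (m+2) (Fin.init r) with hGdef
    have hr' : ∀ i, 0 < Fin.init r i ∧ Fin.init r i < π := fun i => hr i.castSucc
    have hGc : Continuous G := sphF_cont (by omega) _
    have hGeven : ∀ t, G (-t) = G t := fun t => sphF_even _ t
    have hGper : ∀ t, G (t + 2*π) = G t := fun t => sphF_per _ t
    show sphF ((m+2)+1) r y ≤ sphF ((m+2)+1) r x
    rw [sphF_succ (m+2) (by omega) r x, sphF_succ (m+2) (by omega) r y]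
    have hint : ∀ a b : ℝ, IntervalIntegrable G MeasureTheory.volume a b :=
      fun a b => hGc.intervalIntegrable a b
    have split1 : ∫ t in (x-c)..(x+c), G t
        = (∫ t in (x-c)..(y-c), G t) + ∫ t in (y-c)..(x+c), G t :=
      (intervalIntegral.integral_add_adjacent_intervals (hint _ _) (hint _ _)).symm
    have split2 : ∫ t in (y-c)..(y+c), G t
        = (∫ t in (y-c)..(x+c), G t) + ∫ t in (x+c)..(y+c), G t :=
      (intervalIntegral.integral_add_adjacent_intervals (hint _ _) (hint _ _)).symm
    have shift : ∫ t in (x-c)..(y-c), G (t + 2*c) = ∫ t in (x+c)..(y+c), G t := by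
      have h := intervalIntegral.integral_comp_add_right (a := x-c) (b := y-c) (d := 2*c) G
      rw [show x-c+2*c = x+c from by ring, show y-c+2*c = y+c from by ring] at h
      exact h
    have point : ∀ t ∈ Set.Icc (x-c) (y-c), G (t + 2*c) ≤ G t := by
      intro t ⟨ht1, ht2⟩
      have habs : G |t| = G t := by
        rcases le_or_gt 0 t with h|h
        · rw [abs_of_nonneg h]
        · rw [abs_of_neg h, hGeven]
      rcases le_or_gt (t + 2*c) π with hs|hs
      · have hle : |t| ≤ t + 2*c := by
          rcases abs_cases t with ⟨e,f⟩|⟨e,f⟩ <;> rw [e] <;> linarith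
        have := ih (Fin.init r) hr' (abs_nonneg t) hle hs
        exact le_trans this (le_of_eq habs)
      · have e : G (t + 2*c) = G (2*π - (t + 2*c)) := by
          have p1 := hGper (t + 2*c - 2*π)
          rw [show t+2*c-2*π+2*π = t+2*c from by ring] at p1
          rw [p1, show t+2*c-2*π = -(2*π - (t+2*c)) from by ring, hGeven]
        have hle : |t| ≤ 2*π - (t + 2*c) := by
          rcases abs_cases t with ⟨e2,f2⟩|⟨e2,f2⟩ <;> rw [e2] <;> linarith
        have h2 : 2*π - (t + 2*c) ≤ π := by linarith
        have := ih (Fin.init r) hr' (abs_nonneg t) hle h2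
        rw [e]
        exact le_trans this (le_of_eq habs)
    have hshiftint : IntervalIntegrable (fun t => G (t + 2*c)) MeasureTheory.volume (x-c) (y-c) :=
      (hGc.comp (continuous_id.add continuous_const)).intervalIntegrable _ _
    have mono := intervalIntegral.integral_mono_on (by linarith : x-c ≤ y-c)
      hshiftint (hint _ _) point
    rw [shift] at mono
    linarith

theorem spherical_volume_nonneg (n : ℕ) (hn : 4 ≤ n) (r : Fin n → ℝ)
    (hr : ∀ i, 0 < r i ∧ r i < π) :
    0 ≤ ∑' k : ℕ, (∏ i, Real.sin (((k : ℝ) + 1) * r i)) / ((k : ℝ) + 1) ^ (n - 2) := by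
  have hpi := Real.pi_pos
  obtain ⟨m, rfl⟩ : ∃ m, n = m + 4 := ⟨n - 4, by omega⟩
  set r1 : Fin (m+3) → ℝ := Fin.init r with hr1
  set b := r (Fin.last (m+3)) with hb
  set r2 : Fin (m+2) → ℝ := Fin.init r1 with hr2
  set a := r1 (Fin.last (m+2)) with ha
  obtain ⟨ha0, haπ⟩ := hr ((Fin.last (m+2)).castSucc)
  obtain ⟨hb0, hbπ⟩ := hr (Fin.last (m+3))
  have ha0' : 0 < a := ha0
  have haπ' : a < π := haπ
  have hb0' : 0 < b := hb0
  have hbπ' : b < π := hbπ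
  have hr2' : ∀ i, 0 < r2 i ∧ r2 i < π := fun i => hr (i.castSucc.castSucc)
  have hm2 : 2 ≤ m + 2 := by omega
  have h1 := (summable_sphF hm2 r2 (a-b)).hasSum
  have h2 := (summable_sphF hm2 r2 (a+b)).hasSum
  have H := ((h1.sub h2).div_const 2)
  have heq : (fun k : ℕ =>
      ((∏ i, Real.sin (((k:ℝ)+1) * r2 i)) * Real.cos (((k:ℝ)+1) * (a-b)) / ((k:ℝ)+1)^(m+2)
       - (∏ i, Real.sin (((k:ℝ)+1) * r2 i)) * Real.cos (((k:ℝ)+1) * (a+b)) / ((k:ℝ)+1)^(m+2)) / 2)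
      = fun k : ℕ => (∏ i, Real.sin (((k : ℝ) + 1) * r i)) / ((k : ℝ) + 1) ^ (m + 4 - 2) := by
    funext k
    have e0 : (m + 4 - 2) = m + 2 := rfl
    rw [e0]
    have e1 : ∏ i, Real.sin (((k : ℝ) + 1) * r i)
        = (∏ i, Real.sin (((k:ℝ)+1) * r2 i)) * Real.sin (((k:ℝ)+1) * a)
          * Real.sin (((k:ℝ)+1) * b) := by
      rw [Fin.prod_univ_castSucc (f := fun i => Real.sin (((k:ℝ)+1) * r i))]
      rw [Fin.prod_univ_castSucc (f := fun i : Fin (m+3) => Real.sin (((k:ℝ)+1) * r i.castSucc))]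
      rfl
    rw [e1, mul_assoc]
    have e2 : Real.sin (((k:ℝ)+1) * a) * Real.sin (((k:ℝ)+1) * b)
        = (Real.cos (((k:ℝ)+1) * (a-b)) - Real.cos (((k:ℝ)+1) * (a+b)))/2 := by
      simp only [mul_add, mul_sub, Real.cos_add, Real.cos_sub]
      ring
    rw [e2]
    ring
  rw [heq] at H
  rw [H.tsum_eq]
  have key : sphF (m+2) r2 (a+b) ≤ sphF (m+2) r2 (a-b) := by
    have habs : sphF (m+2) r2 |a-b| = sphF (m+2) r2 (a-b) := by
      rcases le_or_gt 0 (a-b) with h|h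
      · rw [abs_of_nonneg h]
      · rw [abs_of_neg h, sphF_even]
    rcases le_or_gt (a+b) π with h|h
    · have hle : |a-b| ≤ a+b := by
        rcases abs_cases (a-b) with ⟨e,_⟩|⟨e,_⟩ <;> rw [e] <;> linarith
      have := sphF_mono m r2 hr2' (abs_nonneg _) hle h
      exact le_trans this (le_of_eq habs)
    · have e : sphF (m+2) r2 (a+b) = sphF (m+2) r2 (2*π - (a+b)) := by
        have p1 := sphF_per r2 (a+b-2*π)
        rw [show a+b-2*π+2*π = a+b from by ring] at p1
        rw [p1, show a+b-2*π = -(2*π - (a+b)) from by ring, sphF_even]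
      have hle : |a-b| ≤ 2*π - (a+b) := by
        rcases abs_cases (a-b) with ⟨e2,_⟩|⟨e2,_⟩ <;> rw [e2] <;> linarith
      have h2' : 2*π - (a+b) ≤ π := by linarith
      have := sphF_mono m r2 hr2' (abs_nonneg _) hle h2'
      rw [e]
      exact le_trans this (le_of_eq habs)
  have : sphF (m+2) r2 (a+b) ≤ sphF (m+2) r2 (a-b) := key
  unfold sphF at this
  linarith [this]
end

section
/- Let n ≥ 4 be an integer and let r_1, …, r_n be real numbers with 0 < r_i < π for all i. If there exists a subset I ⊆ {1,…,n} of odd cardinality with r_I > r_{Ī} + (|I| − 1)π, then Σ_{k=1}^∞ (sin(k r_1)⋯sin(k r_n))/k^{n−2} = 0. -/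
open Real Finset

lemma lc_taylor (c : ℝ) (Q : Polynomial ℝ) :
    (Polynomial.taylor c Q).leadingCoeff = Q.leadingCoeff := by
  rw [Polynomial.leadingCoeff, Polynomial.natDegree_taylor, Polynomial.taylor_coeff,
    Polynomial.leadingCoeff]
  have h : Polynomial.hasseDeriv Q.natDegree Q = Polynomial.C (Q.coeff Q.natDegree) := by
    ext n
    rw [Polynomial.hasseDeriv_coeff, Polynomial.coeff_C]
    rcases Nat.eq_zero_or_pos n with hn | hn
    · subst hn; simp
    · have h2 : Q.natDegree < n + Q.natDegree := by omega
      rw [Polynomial.coeff_eq_zero_of_natDegree_lt h2, if_neg (by omega), mul_zero]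
  rw [h, Polynomial.eval_C]

lemma findiff {ι : Type*} [DecidableEq ι] (S : Finset ι) :
    ∀ Q : Polynomial ℝ, Q.degree < S.card → ∀ (a : ℝ) (d : ι → ℝ),
      ∑ T ∈ S.powerset, (-1 : ℝ) ^ T.card * Q.eval (a + ∑ i ∈ T, d i) = 0 := by
  induction S using Finset.induction_on with
  | empty =>
    intro Q hQ a d
    have hQ0 : Q = 0 := by
      rw [← Polynomial.degree_eq_bot]
      exact Nat.WithBot.lt_zero_iff.mp (by simpa using hQ)
    simp [hQ0]
  | @insert i S hi ih =>
    intro Q hQ a d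
    by_cases hQ0 : Q = 0
    · simp [hQ0]
    have hdeg : Q.natDegree ≤ S.card := by
      have h3 : Q.degree < ((S.card + 1 : ℕ) : WithBot ℕ) := by
        rw [Finset.card_insert_of_notMem hi] at hQ; exact_mod_cast hQ
      have := (Polynomial.natDegree_lt_iff_degree_lt hQ0).mpr h3
      omega
    rw [Finset.sum_powerset_insert hi, ← Finset.sum_add_distrib]
    have key : ∀ T ∈ S.powerset,
        (-1:ℝ)^T.card * Q.eval (a + ∑ i ∈ T, d i)
          + (-1:ℝ)^(insert i T).card * Q.eval (a + ∑ j ∈ insert i T, d j)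
        = (-1:ℝ)^T.card * (Q - Polynomial.taylor (d i) Q).eval (a + ∑ i ∈ T, d i) := by
      intro T hT
      have hiT : i ∉ T := fun h => hi (Finset.mem_powerset.mp hT h)
      rw [Finset.card_insert_of_notMem hiT, Finset.sum_insert hiT,
        Polynomial.eval_sub, Polynomial.taylor_eval,
        show a + (d i + ∑ j ∈ T, d j) = a + ∑ j ∈ T, d j + d i by ring, pow_succ]
      ring
    rw [Finset.sum_congr rfl key]
    set R := Q - Polynomial.taylor (d i) Q with hR
    by_cases hR0 : R = 0
    · simp [hR0]
    · refine ih R ?_ a d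
      have h1 : (Polynomial.taylor (d i) Q) ≠ 0 := fun h => hQ0 <| by
        have := Polynomial.taylor_injective (d i) (R := ℝ)
        exact this (by simpa using h)
      have hdegeq : Q.degree = (Polynomial.taylor (d i) Q).degree := by
        rw [Polynomial.degree_eq_natDegree hQ0, Polynomial.degree_eq_natDegree h1,
          Polynomial.natDegree_taylor]
      calc R.degree < Q.degree := Polynomial.degree_sub_lt hdegeq hQ0 (lc_taylor (d i) Q).symm
        _ = (Q.natDegree : WithBot ℕ) := Polynomial.degree_eq_natDegree hQ0
        _ ≤ (S.card : WithBot ℕ) := by exact_mod_cast hdeg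

lemma shift_hasSum {f : ℕ → ℝ} {L : ℝ} (h : HasSum f L) (h0 : f 0 = 0) :
    HasSum (fun k => f (k + 1)) L := by
  have := (hasSum_nat_add_iff' (f := f) 1).mpr h
  simpa [h0] using this


lemma bernoulli_natDegree_le (n : ℕ) : (Polynomial.bernoulli n).natDegree ≤ n := by
  unfold Polynomial.bernoulli
  refine Polynomial.natDegree_sum_le_of_forall_le _ _ (fun i _ => ?_)
  exact (Polynomial.natDegree_monomial_le _).trans (Nat.sub_le _ _)

lemma cos_tsum_poly (j : ℕ) (hj : j ≠ 0) :
    ∃ Q : Polynomial ℝ, Q.natDegree ≤ 2 * j ∧ ∀ φ ∈ Set.Icc (0:ℝ) (2*π),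
      HasSum (fun k : ℕ => Real.cos ((((k:ℝ)+1) * φ)) / ((k:ℝ)+1) ^ (2*j)) (Q.eval φ) := by
  refine ⟨Polynomial.C ((-1:ℝ)^(j+1) * (2*π)^(2*j) / 2 / (Nat.factorial (2*j))) *
    ((Polynomial.bernoulli (2*j)).map (algebraMap ℚ ℝ)).comp
      (Polynomial.C (2*π)⁻¹ * Polynomial.X), ?_, ?_⟩
  · refine (Polynomial.natDegree_C_mul_le _ _).trans (Polynomial.natDegree_comp_le.trans ?_)
    have h1 : ((Polynomial.bernoulli (2*j)).map (algebraMap ℚ ℝ)).natDegree ≤ 2*j :=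
      Polynomial.natDegree_map_le.trans (bernoulli_natDegree_le _)
    have h2 : (Polynomial.C (2*π)⁻¹ * Polynomial.X : Polynomial ℝ).natDegree ≤ 1 :=
      (Polynomial.natDegree_C_mul_le _ _).trans Polynomial.natDegree_X_le
    calc _ ≤ (2*j) * 1 := Nat.mul_le_mul h1 h2
      _ = 2*j := by omega
  · intro φ hφ
    have hπ : (0:ℝ) < 2*π := by positivity
    have hx : (2*π)⁻¹ * φ ∈ Set.Icc (0:ℝ) 1 := by
      constructor
      · exact mul_nonneg (by positivity) hφ.1
      · rw [← inv_mul_cancel₀ (ne_of_gt hπ)]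
        exact mul_le_mul_of_nonneg_left hφ.2 (by positivity)
    have h := hasSum_one_div_nat_pow_mul_cos hj hx
    have h0 : (1:ℝ) / ((0:ℕ):ℝ) ^ (2*j) * Real.cos (2*π*((0:ℕ):ℝ)*((2*π)⁻¹*φ)) = 0 := by
      rw [Nat.cast_zero, zero_pow (by omega), div_zero, zero_mul]
    have h' := shift_hasSum h h0
    have hfun : (fun k : ℕ => 1 / (((k+1:ℕ)):ℝ) ^ (2*j) *
        Real.cos (2*π*((k+1:ℕ):ℝ)*((2*π)⁻¹*φ)))
        = fun k : ℕ => Real.cos ((((k:ℝ)+1) * φ)) / ((k:ℝ)+1) ^ (2*j) := by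
      funext k
      have harg : 2*π*((k+1:ℕ):ℝ)*((2*π)⁻¹*φ) = ((k:ℝ)+1) * φ := by
        push_cast
        field_simp
      rw [harg]
      push_cast
      ring
    rw [hfun] at h'
    convert h' using 1
    simp only [Polynomial.eval_mul, Polynomial.eval_C, Polynomial.eval_comp, Polynomial.eval_X]

lemma sin_tsum_poly (j : ℕ) (hj : j ≠ 0) :
    ∃ Q : Polynomial ℝ, Q.natDegree ≤ 2 * j + 1 ∧ ∀ φ ∈ Set.Icc (0:ℝ) (2*π),
      HasSum (fun k : ℕ => Real.sin ((((k:ℝ)+1) * φ)) / ((k:ℝ)+1) ^ (2*j+1)) (Q.eval φ) := by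
  refine ⟨Polynomial.C ((-1:ℝ)^(j+1) * (2*π)^(2*j+1) / 2 / (Nat.factorial (2*j+1))) *
    ((Polynomial.bernoulli (2*j+1)).map (algebraMap ℚ ℝ)).comp
      (Polynomial.C (2*π)⁻¹ * Polynomial.X), ?_, ?_⟩
  · refine (Polynomial.natDegree_C_mul_le _ _).trans (Polynomial.natDegree_comp_le.trans ?_)
    have h1 : ((Polynomial.bernoulli (2*j+1)).map (algebraMap ℚ ℝ)).natDegree ≤ 2*j+1 :=
      Polynomial.natDegree_map_le.trans (bernoulli_natDegree_le _)
    have h2 : (Polynomial.C (2*π)⁻¹ * Polynomial.X : Polynomial ℝ).natDegree ≤ 1 :=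
      (Polynomial.natDegree_C_mul_le _ _).trans Polynomial.natDegree_X_le
    calc _ ≤ (2*j+1) * 1 := Nat.mul_le_mul h1 h2
      _ = 2*j+1 := by omega
  · intro φ hφ
    have hπ : (0:ℝ) < 2*π := by positivity
    have hx : (2*π)⁻¹ * φ ∈ Set.Icc (0:ℝ) 1 := by
      constructor
      · exact mul_nonneg (by positivity) hφ.1
      · rw [← inv_mul_cancel₀ (ne_of_gt hπ)]
        exact mul_le_mul_of_nonneg_left hφ.2 (by positivity)
    have h := hasSum_one_div_nat_pow_mul_sin hj hx
    have h0 : (1:ℝ) / ((0:ℕ):ℝ) ^ (2*j+1) * Real.sin (2*π*((0:ℕ):ℝ)*((2*π)⁻¹*φ)) = 0 := by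
      rw [Nat.cast_zero, zero_pow (by omega), div_zero, zero_mul]
    have h' := shift_hasSum h h0
    have hfun : (fun k : ℕ => 1 / (((k+1:ℕ)):ℝ) ^ (2*j+1) *
        Real.sin (2*π*((k+1:ℕ):ℝ)*((2*π)⁻¹*φ)))
        = fun k : ℕ => Real.sin ((((k:ℝ)+1) * φ)) / ((k:ℝ)+1) ^ (2*j+1) := by
      funext k
      have harg : 2*π*((k+1:ℕ):ℝ)*((2*π)⁻¹*φ) = ((k:ℝ)+1) * φ := by
        push_cast
        field_simp
      rw [harg]
      push_cast
      ring
    rw [hfun] at h'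
    convert h' using 1
    simp only [Polynomial.eval_mul, Polynomial.eval_C, Polynomial.eval_comp, Polynomial.eval_X]

noncomputable def Fker (n : ℕ) (φ : ℝ) (k : ℕ) : ℝ :=
  (((2*Complex.I)^n)⁻¹ * Complex.exp (Complex.I * ((((k:ℝ)+1) * φ : ℝ) : ℂ))).re
    / ((k:ℝ)+1)^(n-2)

lemma core (n : ℕ) (hn : 4 ≤ n) :
    ∃ Q : Polynomial ℝ, Q.natDegree ≤ n - 2 ∧ ∀ φ ∈ Set.Icc (0:ℝ) (2*π),
      HasSum (Fker n φ) (Q.eval φ) := by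
  rcases Nat.even_or_odd n with he | ho
  · obtain ⟨j, hj⟩ := he
    have hn2 : n = 2 * j := by omega
    have key2 : ((2:ℂ)*Complex.I)^2 = -4 := by
      rw [mul_pow, Complex.I_sq]; norm_num
    have hc : ((-4:ℂ))⁻¹ = 2⁻¹^2 * -1 := by norm_num
    have hpow : (((2*Complex.I)^n)⁻¹ : ℂ) = (((2:ℝ)⁻¹^n * (-1)^j : ℝ) : ℂ) := by
      rw [hn2, pow_mul, key2, ← inv_pow, hc]
      push_cast
      ring_nf
      rw [mul_comm j 2, pow_mul, ← mul_pow]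
      norm_num
    obtain ⟨Q₀, hd, hQ₀⟩ := cos_tsum_poly (j-1) (by omega)
    refine ⟨Polynomial.C ((2:ℝ)⁻¹^n * (-1)^j) * Q₀,
      (Polynomial.natDegree_C_mul_le _ _).trans (by omega), ?_⟩
    intro φ hφ
    have h := (hQ₀ φ hφ).mul_left ((2:ℝ)⁻¹^n * (-1)^j)
    have hfun : (fun k : ℕ => ((2:ℝ)⁻¹^n * (-1)^j) *
        (Real.cos ((((k:ℝ)+1) * φ)) / ((k:ℝ)+1) ^ (2*(j-1)))) = Fker n φ := by
      funext k
      unfold Fker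
      rw [hpow, Complex.re_ofReal_mul, mul_comm Complex.I _, Complex.exp_ofReal_mul_I_re,
        show n - 2 = 2*(j-1) by omega]
      ring
    rw [hfun] at h
    convert h using 1
    · rfl
    simp [Polynomial.eval_mul]
  · obtain ⟨j, hj⟩ := ho
    have hj2 : 2 ≤ j := by omega
    have key2 : ((2:ℂ)*Complex.I)^2 = -4 := by
      rw [mul_pow, Complex.I_sq]; norm_num
    have hc : ((-4:ℂ))⁻¹ = 2⁻¹^2 * -1 := by norm_num
    have hpow : (((2*Complex.I)^n)⁻¹ : ℂ) = (((2:ℝ)⁻¹^n * (-1)^(j+1) : ℝ) : ℂ) * Complex.I := by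
      rw [hj, pow_succ, pow_mul, key2, mul_inv, ← inv_pow, hc, mul_inv, Complex.inv_I]
      push_cast
      ring_nf
      rw [mul_comm j 2, pow_mul]
      have h5 : ((-1:ℂ)) ^ j * ((1 / 2) ^ 2) ^ j = (-1/4 : ℂ)^j := by
        rw [← mul_pow]; norm_num
      conv_rhs => rw [mul_assoc Complex.I, h5]
    obtain ⟨Q₀, hd, hQ₀⟩ := sin_tsum_poly (j-1) (by omega)
    refine ⟨Polynomial.C ((2:ℝ)⁻¹^n * (-1)^j) * Q₀,
      (Polynomial.natDegree_C_mul_le _ _).trans (by omega), ?_⟩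
    intro φ hφ
    have h := (hQ₀ φ hφ).mul_left ((2:ℝ)⁻¹^n * (-1)^j)
    have hfun : (fun k : ℕ => ((2:ℝ)⁻¹^n * (-1)^j) *
        (Real.sin ((((k:ℝ)+1) * φ)) / ((k:ℝ)+1) ^ (2*(j-1)+1))) = Fker n φ := by
      funext k
      unfold Fker
      rw [hpow, show n - 2 = 2*(j-1)+1 by omega,
        mul_assoc (((2:ℝ)⁻¹^n * (-1)^(j+1) : ℝ) : ℂ) Complex.I _, Complex.re_ofReal_mul,
        mul_comm Complex.I ((((k:ℝ)+1) * φ : ℝ) : ℂ), Complex.I_mul_re,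
        Complex.exp_ofReal_mul_I_im, pow_succ]
      ring
    rw [hfun] at h
    convert h using 1
    · rfl
    simp [Polynomial.eval_mul]

lemma expandC (n : ℕ) (s : Fin n → ℝ) (t : ℝ) :
    ((∏ i, Real.sin (t * s i) : ℝ) : ℂ) =
      ∑ T ∈ (univ : Finset (Fin n)).powerset,
        ((2*Complex.I)^n)⁻¹ * (-1)^(n - T.card) *
          Complex.exp (Complex.I * ((t * (∑ i ∈ T, s i - ∑ i ∈ univ \ T, s i) : ℝ) : ℂ)) := by
  have hsin : ∀ z : ℂ, Complex.sin z =
      Complex.exp (z*Complex.I) * (2*Complex.I)⁻¹ +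
        -(Complex.exp (-z*Complex.I) * (2*Complex.I)⁻¹) := by
    intro z
    rw [Complex.sin]
    simp only [neg_mul]
    have hI := Complex.I_ne_zero
    field_simp
    linear_combination (Complex.exp (-(z * Complex.I)) - Complex.exp (z * Complex.I)) *
      Complex.I_sq
  push_cast
  calc (∏ i, Complex.sin ((t : ℂ) * (s i : ℂ)))
      = ∏ i, (Complex.exp ((t : ℂ) * (s i : ℂ) * Complex.I) * (2*Complex.I)⁻¹ +
          -(Complex.exp (-((t : ℂ) * (s i : ℂ)) * Complex.I) * (2*Complex.I)⁻¹)) := by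
        refine Finset.prod_congr rfl fun i _ => ?_
        rw [hsin]
    _ = ∑ T ∈ (univ : Finset (Fin n)).powerset,
        (∏ i ∈ T, Complex.exp ((t : ℂ) * (s i : ℂ) * Complex.I) * (2*Complex.I)⁻¹) *
          ∏ i ∈ univ \ T, -(Complex.exp (-((t : ℂ) * (s i : ℂ)) * Complex.I) * (2*Complex.I)⁻¹) := by
        rw [Finset.prod_add]
    _ = _ := by
        refine Finset.sum_congr rfl fun T hT => ?_
        have hTsub : T ⊆ univ := Finset.mem_powerset.mp hT
        have hcard : (univ \ T).card = n - T.card := by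
          rw [Finset.card_univ_diff, Fintype.card_fin]
        rw [Finset.prod_mul_distrib, Finset.prod_const, ← Complex.exp_sum]
        have hneg : ∏ i ∈ univ \ T, -(Complex.exp (-((t : ℂ) * (s i : ℂ)) * Complex.I) * (2*Complex.I)⁻¹)
            = (-1 : ℂ)^(n - T.card) * (Complex.exp (∑ i ∈ univ \ T, -((t : ℂ) * (s i : ℂ)) * Complex.I) *
                ((2*Complex.I)⁻¹)^(n - T.card)) := by
          rw [show (fun i => -(Complex.exp (-((t : ℂ) * (s i : ℂ)) * Complex.I) * (2*Complex.I)⁻¹))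
              = fun i => (-1 : ℂ) * (Complex.exp (-((t : ℂ) * (s i : ℂ)) * Complex.I) * (2*Complex.I)⁻¹)
              from funext fun i => by ring]
          rw [Finset.prod_mul_distrib, Finset.prod_mul_distrib, Finset.prod_const,
            Finset.prod_const, ← Complex.exp_sum, hcard]
        rw [hneg]
        have hexp2 : Complex.exp (∑ i ∈ T, (t : ℂ) * (s i : ℂ) * Complex.I) *
            Complex.exp (∑ i ∈ univ \ T, -((t : ℂ) * (s i : ℂ)) * Complex.I)
            = Complex.exp (Complex.I * ((t:ℂ) * ((∑ i ∈ T, (s i : ℂ)) - ∑ i ∈ univ \ T, (s i : ℂ)))) := by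
          rw [← Complex.exp_add]
          congr 1
          rw [← Finset.sum_mul, ← Finset.sum_mul, sum_neg_distrib, ← Finset.mul_sum,
            ← Finset.mul_sum]
          ring
        have hpow : ((2*Complex.I)⁻¹)^T.card * ((2*Complex.I)⁻¹)^(n - T.card)
            = ((2*Complex.I)^n)⁻¹ := by
          have hle := Finset.card_le_card hTsub
          rw [Finset.card_univ, Fintype.card_fin] at hle
          rw [← pow_add, show T.card + (n - T.card) = n by omega, inv_pow]
        have harr : Complex.exp (∑ i ∈ T, (t : ℂ) * (s i : ℂ) * Complex.I) * ((2*Complex.I)⁻¹)^T.card *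
            ((-1 : ℂ)^(n - T.card) * (Complex.exp (∑ i ∈ univ \ T, -((t : ℂ) * (s i : ℂ)) * Complex.I) *
              ((2*Complex.I)⁻¹)^(n - T.card)))
            = (((2*Complex.I)⁻¹)^T.card * ((2*Complex.I)⁻¹)^(n - T.card)) * (-1 : ℂ)^(n - T.card) *
              (Complex.exp (∑ i ∈ T, (t : ℂ) * (s i : ℂ) * Complex.I) *
                Complex.exp (∑ i ∈ univ \ T, -((t : ℂ) * (s i : ℂ)) * Complex.I)) := by
          ring
        rw [harr, hpow, hexp2]

theorem spherical_volume_zero (n : ℕ) (hn : 4 ≤ n) (r : Fin n → ℝ)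
    (hr : ∀ i, 0 < r i ∧ r i < π)
    (hI : ∃ I : Finset (Fin n), Odd I.card ∧
      ∑ i ∈ I, r i > ∑ i ∈ Iᶜ, r i + ((I.card : ℝ) - 1) * π) :
    ∑' k : ℕ, (∏ i, Real.sin (((k : ℝ) + 1) * r i)) / ((k : ℝ) + 1) ^ (n - 2) = 0 := by
  obtain ⟨I, hIodd, hIgt⟩ := hI
  set s : Fin n → ℝ := fun i => if i ∈ I then π - r i else r i with hs
  have hs0 : ∀ i, 0 ≤ s i := by
    intro i
    simp only [hs]
    split
    · linarith [(hr i).2]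
    · linarith [(hr i).1]
  -- sum of s is < π
  have hsumI : ∑ i ∈ I, s i = I.card * π - ∑ i ∈ I, r i := by
    rw [Finset.sum_congr rfl (fun i hi => show s i = π - r i by simp [hs, hi]),
      Finset.sum_sub_distrib, Finset.sum_const, nsmul_eq_mul]
  have hsumIc : ∑ i ∈ Iᶜ, s i = ∑ i ∈ Iᶜ, r i := by
    refine Finset.sum_congr rfl fun i hi => ?_
    simp only [hs, if_neg (Finset.mem_compl.mp hi)]
  have hsumlt : ∑ i, s i < π := by
    have hsplit : ∑ i ∈ I, s i + ∑ i ∈ Iᶜ, s i = ∑ i, s i :=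
      Finset.sum_add_sum_compl I s
    rw [← hsplit, hsumI, hsumIc]
    linarith [hIgt]
  -- the sign flip identity
  have hflip : ∀ k : ℕ, ∏ i, Real.sin (((k:ℝ)+1) * r i)
      = (-1:ℝ)^k * ∏ i, Real.sin (((k:ℝ)+1) * s i) := by
    intro k
    have h1 : ∏ i ∈ I, Real.sin (((k:ℝ)+1) * r i)
        = (-1:ℝ)^k * ∏ i ∈ I, Real.sin (((k:ℝ)+1) * s i) := by
      have hterm : ∀ i ∈ I, Real.sin (((k:ℝ)+1) * r i)
          = (-1:ℝ)^k * Real.sin (((k:ℝ)+1) * s i) := by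
        intro i hi
        have hsi : s i = π - r i := by simp [hs, hi]
        have h2 : Real.sin (((k:ℝ)+1) * s i) = (-1:ℝ)^k * Real.sin (((k:ℝ)+1) * r i) := by
          rw [hsi, show ((k:ℝ)+1)*(π - r i) = ((k+1:ℕ):ℝ)*π - ((k:ℝ)+1)*r i by push_cast; ring,
            Real.sin_nat_mul_pi_sub, pow_succ]
          ring
        rw [h2, ← mul_assoc, ← mul_pow]
        norm_num
      rw [Finset.prod_congr rfl hterm, Finset.prod_mul_distrib, Finset.prod_const]
      congr 1
      rw [← pow_mul, mul_comm k I.card, pow_mul, hIodd.neg_one_pow]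
    have h2 : ∏ i ∈ Iᶜ, Real.sin (((k:ℝ)+1) * r i)
        = ∏ i ∈ Iᶜ, Real.sin (((k:ℝ)+1) * s i) := by
      refine Finset.prod_congr rfl fun i hi => ?_
      have : s i = r i := by simp [hs, if_neg (Finset.mem_compl.mp hi)]
      rw [this]
    calc ∏ i, Real.sin (((k:ℝ)+1) * r i)
        = (∏ i ∈ I, Real.sin (((k:ℝ)+1) * r i)) * ∏ i ∈ Iᶜ, Real.sin (((k:ℝ)+1) * r i) :=
          (Finset.prod_mul_prod_compl I _).symm
      _ = ((-1:ℝ)^k * ∏ i ∈ I, Real.sin (((k:ℝ)+1) * s i)) *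
            ∏ i ∈ Iᶜ, Real.sin (((k:ℝ)+1) * s i) := by rw [h1, h2]
      _ = (-1:ℝ)^k * ∏ i, Real.sin (((k:ℝ)+1) * s i) := by
          rw [mul_assoc, Finset.prod_mul_prod_compl]
  -- set up the expansion
  obtain ⟨Q, hQdeg, hQ⟩ := core n hn
  set D : Finset (Fin n) → ℝ := fun T => ∑ i ∈ T, s i - ∑ i ∈ univ \ T, s i with hD
  have hphi : ∀ T : Finset (Fin n), D T + π ∈ Set.Icc (0:ℝ) (2*π) := by
    intro T
    have h1 : 0 ≤ ∑ i ∈ T, s i := Finset.sum_nonneg fun i _ => hs0 i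
    have h2 : ∑ i ∈ T, s i ≤ ∑ i, s i :=
      Finset.sum_le_sum_of_subset_of_nonneg (Finset.subset_univ T) fun i _ _ => hs0 i
    have h3 : 0 ≤ ∑ i ∈ univ \ T, s i := Finset.sum_nonneg fun i _ => hs0 i
    have h4 : ∑ i ∈ univ \ T, s i ≤ ∑ i, s i :=
      Finset.sum_le_sum_of_subset_of_nonneg (Finset.sdiff_subset) fun i _ _ => hs0 i
    have hπ : 0 < π := Real.pi_pos
    constructor
    · simp only [hD]; linarith
    · simp only [hD]; linarith
  set u : Finset (Fin n) → ℕ → ℝ :=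
    fun T k => (-1:ℝ)^(n - T.card + 1) * Fker n (D T + π) k with hu
  have hU : ∀ T ∈ (univ : Finset (Fin n)).powerset,
      HasSum (u T) ((-1:ℝ)^(n - T.card + 1) * Q.eval (D T + π)) := by
    intro T _
    exact (hQ (D T + π) (hphi T)).mul_left _
  have htotal := hasSum_sum hU
  -- pointwise identity
  have hident : ∀ k : ℕ, (∏ i, Real.sin (((k:ℝ)+1) * r i)) / ((k:ℝ)+1)^(n-2)
      = ∑ T ∈ (univ : Finset (Fin n)).powerset, u T k := by
    intro k
    have hre := congrArg Complex.re (expandC n s ((k:ℝ)+1))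
    rw [Complex.ofReal_re, Complex.re_sum] at hre
    rw [hflip k, hre, Finset.mul_sum, Finset.sum_div]
    refine Finset.sum_congr rfl fun T hT => ?_
    have hcle : T.card ≤ n := by
      have := Finset.card_le_card (Finset.mem_powerset.mp hT)
      rwa [Finset.card_univ, Fintype.card_fin] at this
    have hpi : Complex.exp (Complex.I * (((((k:ℝ)+1) * π : ℝ)) : ℂ))
        = (((-1:ℝ)^(k+1) : ℝ) : ℂ) := by
      push_cast
      rw [show Complex.I * (((k:ℂ)+1) * (π:ℂ)) = ((k+1 : ℕ) : ℂ) * ((π:ℂ) * Complex.I) by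
        push_cast; ring, Complex.exp_nat_mul, Complex.exp_pi_mul_I]
    have he : Complex.exp (Complex.I * ((((k:ℝ)+1) * (D T + π) : ℝ) : ℂ))
        = Complex.exp (Complex.I * ((((k:ℝ)+1) * D T : ℝ) : ℂ)) * (((-1:ℝ)^(k+1) : ℝ) : ℂ) := by
      rw [show (((k:ℝ)+1) * (D T + π) : ℝ) = ((k:ℝ)+1) * D T + ((k:ℝ)+1) * π by ring,
        Complex.ofReal_add, mul_add, Complex.exp_add, hpi]
    -- lhs term
    have hz1 : (((2*Complex.I)^n)⁻¹ * (-1:ℂ)^(n - T.card) *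
        Complex.exp (Complex.I * ((((k:ℝ)+1) * (∑ i ∈ T, s i - ∑ i ∈ univ \ T, s i) : ℝ) : ℂ)))
        = (((-1:ℝ)^(n - T.card) : ℝ) : ℂ) *
          (((2*Complex.I)^n)⁻¹ *
            Complex.exp (Complex.I * ((((k:ℝ)+1) * D T : ℝ) : ℂ))) := by
      rw [hD]
      push_cast
      ring
    have hz2 : (((2*Complex.I)^n)⁻¹ *
        Complex.exp (Complex.I * ((((k:ℝ)+1) * (D T + π) : ℝ) : ℂ)))
        = (((-1:ℝ)^(k+1) : ℝ) : ℂ) *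
          (((2*Complex.I)^n)⁻¹ *
            Complex.exp (Complex.I * ((((k:ℝ)+1) * D T : ℝ) : ℂ))) := by
      rw [he]
      ring
    rw [hu]
    simp only []
    unfold Fker
    rw [hz1, hz2, Complex.re_ofReal_mul, Complex.re_ofReal_mul, pow_succ, pow_succ]
    ring
  -- conclude
  have hfinal : HasSum (fun k : ℕ => (∏ i, Real.sin (((k:ℝ)+1) * r i)) / ((k:ℝ)+1)^(n-2))
      (∑ T ∈ (univ : Finset (Fin n)).powerset, (-1:ℝ)^(n - T.card + 1) * Q.eval (D T + π)) := by
    have hfe : (fun k : ℕ => (∏ i, Real.sin (((k:ℝ)+1) * r i)) / ((k:ℝ)+1)^(n-2))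
        = fun b => ∑ T ∈ (univ : Finset (Fin n)).powerset, u T b := funext fun k => hident k
    rw [hfe]
    exact htotal
  rw [hfinal.tsum_eq]
  -- evaluate the finite alternating sum to 0
  have hval : ∀ T ∈ (univ : Finset (Fin n)).powerset,
      (-1:ℝ)^(n - T.card + 1) * Q.eval (D T + π)
      = (-1:ℝ)^(n+1) * ((-1:ℝ)^T.card * Q.eval ((π - ∑ i, s i) + ∑ i ∈ T, 2 * s i)) := by
    intro T hT
    have hcle : T.card ≤ n := by
      have := Finset.card_le_card (Finset.mem_powerset.mp hT)
      rwa [Finset.card_univ, Fintype.card_fin] at this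
    have hsign : (-1:ℝ)^(n+1) * (-1:ℝ)^T.card = (-1:ℝ)^(n - T.card + 1) := by
      rw [← pow_add, show n+1+T.card = (n-T.card+1) + 2*T.card by omega, pow_add, pow_mul]
      norm_num
    have hpt : D T + π = (π - ∑ i, s i) + ∑ i ∈ T, 2 * s i := by
      have hsd : ∑ i ∈ univ \ T, s i = (∑ i, s i) - ∑ i ∈ T, s i :=
        Finset.sum_sdiff_eq_sub (Finset.subset_univ T)
      have h2s : ∑ i ∈ T, 2 * s i = 2 * ∑ i ∈ T, s i := by
        rw [Finset.mul_sum]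
      rw [hD]
      simp only []
      rw [hsd, h2s]
      ring
    rw [← hsign, hpt, mul_assoc]
  rw [Finset.sum_congr rfl hval, ← Finset.mul_sum]
  have hdeg : Q.degree < ((univ : Finset (Fin n)).card : WithBot ℕ) := by
    rw [Finset.card_univ, Fintype.card_fin]
    have h1 : Q.degree ≤ ((n-2 : ℕ) : WithBot ℕ) :=
      Polynomial.degree_le_natDegree.trans (by exact_mod_cast hQdeg)
    refine lt_of_le_of_lt h1 ?_
    exact_mod_cast (by omega : n - 2 < n)
  rw [findiff univ Q hdeg (π - ∑ i, s i) (fun i => 2 * s i), mul_zero]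
end

section
/- Let n ≥ 2 be an integer and let r_1, …, r_{2n} be real numbers with 0 < r_i < π for all i. Then (2^{2n−1}/π)·Σ_{k=1}^∞ (sin(k r_1)⋯sin(k r_{2n}))/k^{2n−2} = ((2π)^{2n−3}/(2·(2n−2)!))·Σ_{I ⊆ {1,…,2n}} (−1)^{|I|} B_{2n−2}({(r_I − r_{Ī})/(2π)}). -/
open Real Finset

lemma sin_prod_expand (N : ℕ) (a : Fin N → ℝ) :
    ((∏ i, Real.sin (a i) : ℝ) : ℂ) =
      ((2 : ℂ) * Complex.I)⁻¹ ^ N * ∑ I : Finset (Fin N),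
        (-1 : ℂ) ^ (N - I.card) *
          Complex.exp ((((∑ i ∈ I, a i) - ∑ i ∈ Iᶜ, a i : ℝ)) * Complex.I) := by
  have hsin : ∀ z : ℂ, Complex.sin z =
      (2 * Complex.I)⁻¹ * (Complex.exp (z * Complex.I) + -Complex.exp (-z * Complex.I)) := by
    intro z
    have hI : ((2 : ℂ) * Complex.I)⁻¹ = -Complex.I / 2 := by
      rw [mul_inv, Complex.inv_I]; ring
    rw [Complex.sin, hI]; ring
  push_cast

  calc ∏ i, Complex.sin ((a i : ℂ))
      = ∏ i, ((2 * Complex.I)⁻¹ *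
          (Complex.exp ((a i : ℂ) * Complex.I) + -Complex.exp (-(a i : ℂ) * Complex.I))) := by
        simp_rw [← hsin]
    _ = (2 * Complex.I)⁻¹ ^ N * ∏ i, (Complex.exp ((a i : ℂ) * Complex.I) +
          -Complex.exp (-(a i : ℂ) * Complex.I)) := by
        rw [Finset.prod_mul_distrib, Finset.prod_const, Finset.card_univ, Fintype.card_fin]
    _ = _ := by
        rw [Finset.prod_add, Finset.powerset_univ]
        congr 1
        refine Finset.sum_congr rfl fun I _ => ?_
        rw [← Finset.compl_eq_univ_sdiff]
        have h1 : ∏ i ∈ I, Complex.exp ((a i : ℂ) * Complex.I)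
            = Complex.exp ((∑ i ∈ I, (a i : ℂ)) * Complex.I) := by
          rw [← Complex.exp_sum, Finset.sum_mul]
        have h2 : ∏ i ∈ Iᶜ, -Complex.exp (-(a i : ℂ) * Complex.I)
            = (-1) ^ (N - I.card) * Complex.exp (-(∑ i ∈ Iᶜ, (a i : ℂ)) * Complex.I) := by
          simp_rw [neg_eq_neg_one_mul (Complex.exp _)]
          rw [Finset.prod_mul_distrib, Finset.prod_const, Finset.card_compl, Fintype.card_fin,
            ← Complex.exp_sum]
          congr 2
          rw [neg_mul, ← Finset.sum_mul, Finset.sum_neg_distrib]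
          ring
        rw [h1, h2]
        rw [mul_comm (Complex.exp _), mul_assoc, ← Complex.exp_add]
        ring_nf

lemma sin_prod_even (n : ℕ) (a : Fin (2 * n) → ℝ) :
    ∏ i, Real.sin (a i) = ((-1 : ℝ) ^ n / 2 ^ (2 * n)) *
      ∑ I : Finset (Fin (2 * n)), (-1 : ℝ) ^ I.card *
        Real.cos ((∑ i ∈ I, a i) - ∑ i ∈ Iᶜ, a i) := by
  have h1 := sin_prod_expand (2 * n) a
  have h2 : ((2 : ℂ) * Complex.I)⁻¹ ^ (2 * n) = (((-1 : ℝ) ^ n / 2 ^ (2 * n) : ℝ) : ℂ) := by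
    have : ((2 : ℂ) * Complex.I)⁻¹ = -Complex.I / 2 := by
      rw [mul_inv, Complex.inv_I]; ring
    rw [this]
    push_cast
    rw [div_pow, pow_mul, neg_pow, Complex.I_sq]
    ring_nf
  rw [h2] at h1
  calc ∏ i, Real.sin (a i) = (((∏ i, Real.sin (a i) : ℝ)) : ℂ).re := (Complex.ofReal_re _).symm
    _ = _ := by
        rw [h1, Complex.re_ofReal_mul, Complex.re_sum]
        congr 1
        refine Finset.sum_congr rfl fun I _ => ?_
        have hc : ((-1 : ℂ) ^ (2 * n - I.card)) = (((-1 : ℝ) ^ (2 * n - I.card) : ℝ) : ℂ) := by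
          push_cast; ring
        rw [hc, Complex.re_ofReal_mul, Complex.exp_ofReal_mul_I_re]
        have hle : I.card ≤ 2 * n := by
          simpa using Finset.card_le_card (Finset.subset_univ I)
        have hpar : (-1 : ℝ) ^ (2 * n - I.card) = (-1 : ℝ) ^ I.card := by
          have h3 : (-1 : ℝ) ^ (2 * n - I.card) * (-1 : ℝ) ^ I.card = 1 := by
            rw [← pow_add, Nat.sub_add_cancel hle, pow_mul]; norm_num
          have h4 : (-1 : ℝ) ^ I.card * (-1 : ℝ) ^ I.card = 1 := by
            rw [← pow_add, ← two_mul, pow_mul]; norm_num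
          exact mul_right_cancel₀ (pow_ne_zero _ (by norm_num : (-1:ℝ) ≠ 0))
            (h3.trans h4.symm)
        rw [hpar]

theorem volume_even_bernoulli (n : ℕ) (hn : 2 ≤ n) (r : Fin (2 * n) → ℝ)
    (hr : ∀ i, 0 < r i ∧ r i < π) :
    (2 ^ (2 * n - 1) / π) *
      ∑' k : ℕ, (∏ i, Real.sin (((k : ℝ) + 1) * r i)) / ((k : ℝ) + 1) ^ (2 * n - 2) =
    ((2 * π) ^ (2 * n - 3) / (2 * (Nat.factorial (2 * n - 2) : ℝ))) *
      ∑ I : Finset (Fin (2 * n)), (-1 : ℝ) ^ I.card *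
        Polynomial.aeval (Int.fract ((∑ i ∈ I, r i - ∑ i ∈ Iᶜ, r i) / (2 * π)))
          (Polynomial.bernoulli (2 * n - 2)) := by
  obtain ⟨m, rfl⟩ : ∃ m, n = m + 1 := ⟨n - 1, by omega⟩
  have hm : 1 ≤ m := by omega
  have e2 : 2 * (m + 1) - 2 = 2 * m := by omega
  have e3 : 2 * (m + 1) - 3 = 2 * m - 1 := by omega
  have e1 : 2 * (m + 1) - 1 = 2 * m + 1 := by omega
  simp only [e1, e2, e3]
  have hπ : (0:ℝ) < π := Real.pi_pos
  have hk : m ≠ 0 := by omega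
  have key : ∀ I : Finset (Fin (2 * (m + 1))),
      HasSum (fun j : ℕ => Real.cos (((j : ℝ) + 1) *
          ((∑ i ∈ I, r i) - ∑ i ∈ Iᶜ, r i)) / ((j : ℝ) + 1) ^ (2 * m))
        ((-1 : ℝ) ^ (m + 1) * (2 * π) ^ (2 * m) / 2 / (Nat.factorial (2 * m) : ℝ) *
          (Polynomial.map (algebraMap ℚ ℝ) (Polynomial.bernoulli (2 * m))).eval
            (Int.fract (((∑ i ∈ I, r i) - ∑ i ∈ Iᶜ, r i) / (2 * π)))) := by
    intro I
    set θ : ℝ := (∑ i ∈ I, r i) - ∑ i ∈ Iᶜ, r i with hθdef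
    have hx01 : Int.fract (θ / (2 * π)) ∈ Set.Icc (0:ℝ) 1 :=
      ⟨Int.fract_nonneg _, (Int.fract_lt_one _).le⟩
    have H := hasSum_one_div_nat_pow_mul_cos hk hx01
    have H' := (hasSum_nat_add_iff' (f := fun j : ℕ =>
        1 / (j : ℝ) ^ (2 * m) * Real.cos (2 * π * j * Int.fract (θ / (2 * π)))) 1).mpr H
    simp only [Finset.range_one, Finset.sum_singleton, Nat.cast_zero,
      zero_pow (by omega : 2 * m ≠ 0), div_zero, zero_mul, sub_zero, mul_zero] at H'
    refine H'.congr_fun fun j => ?_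
    have h2π : (2 * π : ℝ) ≠ 0 := by positivity
    have hfl : (⌊θ / (2 * π)⌋ : ℝ) + Int.fract (θ / (2 * π)) = θ / (2 * π) :=
      Int.floor_add_fract _
    have hθx : θ = 2 * π * Int.fract (θ / (2 * π)) + (⌊θ / (2 * π)⌋ : ℝ) * (2 * π) := by
      have h := congrArg (· * (2 * π)) hfl
      simp only [add_mul, div_mul_cancel₀ _ h2π] at h
      linarith [h]
    have harg : ((j : ℝ) + 1) * θ = 2 * π * ((j : ℕ) + 1 : ℕ) * Int.fract (θ / (2 * π)) +
        (((j : ℤ) + 1) * ⌊θ / (2 * π)⌋ : ℤ) * (2 * π) := by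
      conv_lhs => rw [hθx]
      push_cast
      ring
    rw [harg, Real.cos_add_int_mul_two_pi]
    push_cast
    ring
  have key2 : HasSum
      (fun j : ℕ => ∑ I : Finset (Fin (2 * (m + 1))), (-1 : ℝ) ^ I.card *
        (Real.cos (((j : ℝ) + 1) * ((∑ i ∈ I, r i) - ∑ i ∈ Iᶜ, r i))
          / ((j : ℝ) + 1) ^ (2 * m)))
      (∑ I : Finset (Fin (2 * (m + 1))), (-1 : ℝ) ^ I.card *
        ((-1 : ℝ) ^ (m + 1) * (2 * π) ^ (2 * m) / 2 / (Nat.factorial (2 * m) : ℝ) *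
          (Polynomial.map (algebraMap ℚ ℝ) (Polynomial.bernoulli (2 * m))).eval
            (Int.fract (((∑ i ∈ I, r i) - ∑ i ∈ Iᶜ, r i) / (2 * π))))) :=
    hasSum_sum fun I _ => (key I).mul_left _
  have key3 : HasSum
      (fun j : ℕ => (∏ i, Real.sin (((j : ℝ) + 1) * r i)) / ((j : ℝ) + 1) ^ (2 * m))
      (((-1 : ℝ) ^ (m + 1) / 2 ^ (2 * (m + 1))) *
        ∑ I : Finset (Fin (2 * (m + 1))), (-1 : ℝ) ^ I.card *
        ((-1 : ℝ) ^ (m + 1) * (2 * π) ^ (2 * m) / 2 / (Nat.factorial (2 * m) : ℝ) *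
          (Polynomial.map (algebraMap ℚ ℝ) (Polynomial.bernoulli (2 * m))).eval
            (Int.fract (((∑ i ∈ I, r i) - ∑ i ∈ Iᶜ, r i) / (2 * π))))) := by
    refine (key2.mul_left _).congr_fun fun j => ?_
    have hprod := sin_prod_even (m + 1) (fun i => ((j : ℝ) + 1) * r i)
    have hphase : ∀ I : Finset (Fin (2 * (m + 1))),
        ((∑ i ∈ I, ((j : ℝ) + 1) * r i) - ∑ i ∈ Iᶜ, ((j : ℝ) + 1) * r i)
          = ((j : ℝ) + 1) * ((∑ i ∈ I, r i) - ∑ i ∈ Iᶜ, r i) := by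
      intro I
      simp only [← Finset.mul_sum]
      ring
    simp only [hphase] at hprod
    rw [hprod, Finset.mul_sum, Finset.sum_div, Finset.mul_sum]
    refine Finset.sum_congr rfl fun I _ => ?_
    ring
  rw [key3.tsum_eq]
  have haev : ∀ y : ℝ,
      (Polynomial.aeval y) (Polynomial.bernoulli (2 * m))
        = (Polynomial.map (algebraMap ℚ ℝ) (Polynomial.bernoulli (2 * m))).eval y := by
    intro y
    rw [Polynomial.aeval_def, Polynomial.eval_map]
  simp only [haev]
  simp only [Finset.mul_sum]
  refine Finset.sum_congr rfl fun I _ => ?_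
  have hpow2 : (2 * π : ℝ) ^ (2 * m) = (2 * π) ^ (2 * m - 1) * (2 * π) := by
    conv_lhs => rw [show 2 * m = (2 * m - 1) + 1 by omega, pow_succ]
  have h2pow : (2 : ℝ) ^ (2 * (m + 1)) = 2 ^ (2 * m + 1) * 2 := by
    rw [show 2 * (m + 1) = (2 * m + 1) + 1 by omega, pow_succ]
  have hfac : ((Nat.factorial (2 * m)) : ℝ) ≠ 0 := by positivity
  have hπne : π ≠ 0 := ne_of_gt hπ
  have h2ne : (2 : ℝ) ^ (2 * m + 1) ≠ 0 := by positivity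
  rcases Nat.even_or_odd (m + 1) with he | ho
  · rw [he.neg_one_pow, hpow2, h2pow]
    field_simp
    try ring
  · rw [ho.neg_one_pow, hpow2, h2pow]
    field_simp
    try ring
end

section
/- Let n ≥ 2 be an integer and let r_1, …, r_{2n+1} be real numbers with 0 < r_i < π for all i. Then (2^{2n}/π)·Σ_{k=1}^∞ (sin(k r_1)⋯sin(k r_{2n+1}))/k^{2n−1} = ((2π)^{2n−2}/(2n−1)!)·Σ_{I ⊆ {1,…,2n+1}, |I| odd} B_{2n−1}({(r_I − r_{Ī})/(2π)}). -/
open Real Finset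

lemma sin_eq_aux (z : ℂ) : Complex.sin z =
    (Complex.exp (z * Complex.I) + -Complex.exp (-z * Complex.I)) * (-Complex.I / 2) := by
  rw [Complex.exp_mul_I, show -z * Complex.I = (-z) * Complex.I from rfl, Complex.exp_mul_I,
    Complex.cos_neg, Complex.sin_neg]
  linear_combination (Complex.sin z) * Complex.I_sq

lemma prod_neg_aux {α : Type*} (s : Finset α) (f : α → ℂ) :
    ∏ i ∈ s, -f i = (-1) ^ s.card * ∏ i ∈ s, f i := by
  calc ∏ i ∈ s, -f i = ∏ i ∈ s, ((-1) * f i) := by simp only [neg_one_mul]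
    _ = (-1) ^ s.card * ∏ i ∈ s, f i := by
        rw [Finset.prod_mul_distrib, Finset.prod_const]

lemma prod_sin_complex (n : ℕ) (θ : Fin (2 * n + 1) → ℂ) :
    ∏ i, Complex.sin (θ i) = ((-1) ^ n / 4 ^ n) *
      ∑ I ∈ Finset.univ.filter (fun I : Finset (Fin (2 * n + 1)) => Odd I.card),
        Complex.sin (∑ i ∈ I, θ i - ∑ i ∈ Iᶜ, θ i) := by
  classical
  set F : Finset (Fin (2 * n + 1)) → ℂ := fun t =>
    (∏ i ∈ t, Complex.exp (θ i * Complex.I)) * ∏ i ∈ tᶜ, -Complex.exp (-θ i * Complex.I)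
    with hF
  have hFval : ∀ t : Finset (Fin (2 * n + 1)),
      F t = (-1) ^ tᶜ.card * Complex.exp ((∑ i ∈ t, θ i - ∑ i ∈ tᶜ, θ i) * Complex.I) := by
    intro t
    rw [hF]
    simp only [prod_neg_aux, ← Complex.exp_sum, neg_mul, Finset.sum_neg_distrib]
    rw [Complex.exp_neg, sub_mul, Complex.exp_sub, Finset.sum_mul, Finset.sum_mul]
    ring
  have hcard : ∀ t : Finset (Fin (2 * n + 1)), tᶜ.card = (2 * n + 1) - t.card := by
    intro t
    rw [Finset.card_compl, Fintype.card_fin]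
  have hle : ∀ t : Finset (Fin (2 * n + 1)), t.card ≤ 2 * n + 1 := by
    intro t; have := t.card_le_univ; simpa using this
  have step1 : ∏ i, Complex.sin (θ i) =
      (-Complex.I / 2) ^ (2 * n + 1) * ∑ t : Finset (Fin (2 * n + 1)), F t := by
    calc ∏ i, Complex.sin (θ i)
        = ∏ i, ((Complex.exp (θ i * Complex.I) + -Complex.exp (-θ i * Complex.I)) *
            (-Complex.I / 2)) := Finset.prod_congr rfl fun i _ => sin_eq_aux (θ i)
      _ = (∏ i, (Complex.exp (θ i * Complex.I) + -Complex.exp (-θ i * Complex.I))) *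
            (-Complex.I / 2) ^ (2 * n + 1) := by
          rw [Finset.prod_mul_distrib, Finset.prod_const, Finset.card_univ, Fintype.card_fin]
      _ = (-Complex.I / 2) ^ (2 * n + 1) * ∑ t : Finset (Fin (2 * n + 1)), F t := by
          rw [Finset.prod_add, Finset.powerset_univ, mul_comm]
          refine congrArg _ (Finset.sum_congr rfl fun t _ => ?_)
          rw [hF, ← Finset.compl_eq_univ_sdiff]
  have step2 : ∑ t : Finset (Fin (2 * n + 1)), F t =
      ∑ t ∈ Finset.univ.filter (fun t : Finset (Fin (2 * n + 1)) => Odd t.card),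
        (F t + F tᶜ) := by
    rw [Finset.sum_add_distrib]
    rw [← Finset.sum_filter_add_sum_filter_not Finset.univ
      (fun t : Finset (Fin (2 * n + 1)) => Odd t.card) F]
    congr 1
    refine Finset.sum_nbij' (fun t => tᶜ) (fun t => tᶜ) ?_ ?_ ?_ ?_ ?_
    · intro t ht
      simp only [Finset.mem_filter, Finset.mem_univ, true_and, Nat.not_odd_iff_even] at ht ⊢
      rw [hcard]
      exact Nat.Odd.sub_even (hle t) ⟨n, by omega⟩ ht
    · intro t ht
      simp only [Finset.mem_filter, Finset.mem_univ, true_and, Nat.not_odd_iff_even] at ht ⊢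
      rw [hcard]
      exact Nat.Odd.sub_odd ⟨n, by omega⟩ ht
    · intro t _; exact compl_compl t
    · intro t _; exact compl_compl t
    · intro t _; rw [compl_compl]
  have step3 : ∀ t : Finset (Fin (2 * n + 1)), Odd t.card →
      F t + F tᶜ = (2 * Complex.I) * Complex.sin (∑ i ∈ t, θ i - ∑ i ∈ tᶜ, θ i) := by
    intro t ht
    have hc1 : ((-1 : ℂ)) ^ tᶜ.card = 1 := by
      rw [hcard]
      exact Even.neg_one_pow (Nat.Odd.sub_odd ⟨n, by omega⟩ ht)
    have hc2 : ((-1 : ℂ)) ^ t.card = -1 := Odd.neg_one_pow ht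
    rw [hFval t, hFval tᶜ, compl_compl, hc1, hc2]
    have h3 := sin_eq_aux (∑ i ∈ t, θ i - ∑ i ∈ tᶜ, θ i)
    set S := ∑ i ∈ t, θ i - ∑ i ∈ tᶜ, θ i with hS
    have hneg : ∑ i ∈ tᶜ, θ i - ∑ i ∈ t, θ i = -S := by rw [hS]; ring
    rw [hneg]
    linear_combination (-2 * Complex.I) * h3 +
      (Complex.exp (S * Complex.I) - Complex.exp (-S * Complex.I)) * Complex.I_sq
  have hconst : (-Complex.I / 2) ^ (2 * n + 1) * (2 * Complex.I) = (-1) ^ n / 4 ^ n := by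
    have h1 : Complex.I ^ (2 * n + 1) = (-1) ^ n * Complex.I := by
      rw [pow_succ, pow_mul, Complex.I_sq]
    rw [div_pow, neg_pow, h1]
    have h2 : ((2 : ℂ)) ^ (2 * n + 1) = 2 * 4 ^ n := by
      rw [pow_succ, pow_mul]; norm_num [mul_comm]
    rw [h2]
    have h4 : ((4 : ℂ)) ^ n ≠ 0 := pow_ne_zero _ (by norm_num)
    have h5 : (-1 : ℂ) ^ (2 * n + 1) = -1 := by
      rw [pow_succ, pow_mul]; norm_num
    rw [h5]
    field_simp
    linear_combination (-1 : ℂ) * Complex.I_sq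
  rw [step1, step2, Finset.mul_sum, Finset.mul_sum]
  refine Finset.sum_congr rfl fun t ht => ?_
  simp only [Finset.mem_filter] at ht
  rw [step3 t ht.2, ← mul_assoc, hconst]

lemma prod_sin_real (n : ℕ) (θ : Fin (2 * n + 1) → ℝ) :
    ∏ i, Real.sin (θ i) = ((-1) ^ n / 4 ^ n) *
      ∑ I ∈ Finset.univ.filter (fun I : Finset (Fin (2 * n + 1)) => Odd I.card),
        Real.sin (∑ i ∈ I, θ i - ∑ i ∈ Iᶜ, θ i) := by
  have h := prod_sin_complex n (fun i => (θ i : ℂ))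
  rw [← Complex.ofReal_inj]
  push_cast
  convert h using 2 <;> push_cast <;> norm_num

lemma hasSum_sin_shift (K : ℕ) (hK : K ≠ 0) (c : ℝ) :
    HasSum (fun k : ℕ => Real.sin (((k : ℝ) + 1) * c) / ((k : ℝ) + 1) ^ (2 * K + 1))
      ((-1 : ℝ) ^ (K + 1) * (2 * π) ^ (2 * K + 1) / 2 / (Nat.factorial (2 * K + 1) : ℝ) *
        Polynomial.aeval (Int.fract (c / (2 * π)))
          (Polynomial.bernoulli (2 * K + 1))) := by
  set x := Int.fract (c / (2 * π)) with hxdef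
  have hx : x ∈ Set.Icc (0 : ℝ) 1 := ⟨Int.fract_nonneg _, le_of_lt (Int.fract_lt_one _)⟩
  have H := hasSum_one_div_nat_pow_mul_sin hK hx
  have H1 := (hasSum_nat_add_iff' (f := fun m : ℕ =>
      1 / (m : ℝ) ^ (2 * K + 1) * Real.sin (2 * π * m * x)) 1).mpr H
  simp only [Finset.range_one, Finset.sum_singleton, Nat.cast_zero, mul_zero, zero_mul,
    Real.sin_zero, mul_zero, sub_zero] at H1
  have hkey : ∀ k : ℕ, 2 * π * ((k : ℝ) + 1) * x = ((k : ℝ) + 1) * c +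
      (-(((k : ℕ) + 1) * ⌊c / (2 * π)⌋) : ℤ) * (2 * π) := by
    intro k
    have hπ : (2 * π) ≠ 0 := by positivity
    have hc : 2 * π * ((⌊c / (2 * π)⌋ : ℝ) + x) = c := by
      rw [hxdef, Int.floor_add_fract]
      field_simp
    push_cast
    linear_combination ((k : ℝ) + 1) * hc
  have H2 : ∀ k : ℕ, (1 : ℝ) / ((k : ℝ) + 1) ^ (2 * K + 1) *
      Real.sin (2 * π * ((k : ℝ) + 1) * x) =
      Real.sin (((k : ℝ) + 1) * c) / ((k : ℝ) + 1) ^ (2 * K + 1) := by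
    intro k
    rw [hkey k, Real.sin_add_int_mul_two_pi]
    ring
  have H3 : HasSum (fun k : ℕ => Real.sin (((k : ℝ) + 1) * c) / ((k : ℝ) + 1) ^ (2 * K + 1))
      ((-1 : ℝ) ^ (K + 1) * (2 * π) ^ (2 * K + 1) / 2 / (Nat.factorial (2 * K + 1) : ℝ) *
        (Polynomial.map (algebraMap ℚ ℝ) (Polynomial.bernoulli (2 * K + 1))).eval x) := by
    refine H1.congr_fun fun k => ?_
    push_cast
    exact (H2 k).symm
  rw [Polynomial.aeval_def, ← Polynomial.eval_map]
  exact H3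

theorem volume_odd_bernoulli (n : ℕ) (hn : 2 ≤ n) (r : Fin (2 * n + 1) → ℝ)
    (hr : ∀ i, 0 < r i ∧ r i < π) :
    (2 ^ (2 * n) / π) *
      ∑' k : ℕ, (∏ i, Real.sin (((k : ℝ) + 1) * r i)) / ((k : ℝ) + 1) ^ (2 * n - 1) =
    ((2 * π) ^ (2 * n - 2) / (Nat.factorial (2 * n - 1) : ℝ)) *
      ∑ I ∈ Finset.univ.filter (fun I : Finset (Fin (2 * n + 1)) => Odd I.card),
        Polynomial.aeval (Int.fract ((∑ i ∈ I, r i - ∑ i ∈ Iᶜ, r i) / (2 * π)))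
          (Polynomial.bernoulli (2 * n - 1)) := by
  obtain ⟨K, rfl⟩ : ∃ K, n = K + 1 := ⟨n - 1, by omega⟩
  have hK : K ≠ 0 := by omega
  rw [show 2 * (K + 1) - 1 = 2 * K + 1 by omega, show 2 * (K + 1) - 2 = 2 * K by omega]
  have hterm : ∀ k : ℕ,
      (∏ i, Real.sin (((k : ℝ) + 1) * r i)) / ((k : ℝ) + 1) ^ (2 * K + 1) =
      ∑ I ∈ Finset.univ.filter (fun I : Finset (Fin (2 * (K + 1) + 1)) => Odd I.card),
        ((-1 : ℝ) ^ (K + 1) / 4 ^ (K + 1)) *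
        (Real.sin (((k : ℝ) + 1) * (∑ i ∈ I, r i - ∑ i ∈ Iᶜ, r i)) /
          ((k : ℝ) + 1) ^ (2 * K + 1)) := by
    intro k
    rw [prod_sin_real (K + 1) (fun i => ((k : ℝ) + 1) * r i), mul_div_assoc,
      Finset.sum_div, Finset.mul_sum]
    refine Finset.sum_congr rfl fun I _ => ?_
    have harg : ∑ i ∈ I, ((k : ℝ) + 1) * r i - ∑ i ∈ Iᶜ, ((k : ℝ) + 1) * r i =
        ((k : ℝ) + 1) * (∑ i ∈ I, r i - ∑ i ∈ Iᶜ, r i) := by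
      rw [← Finset.mul_sum, ← Finset.mul_sum, ← mul_sub]
    rw [harg]
  have hhs : HasSum
      (fun k : ℕ => (∏ i, Real.sin (((k : ℝ) + 1) * r i)) / ((k : ℝ) + 1) ^ (2 * K + 1))
      (∑ I ∈ Finset.univ.filter (fun I : Finset (Fin (2 * (K + 1) + 1)) => Odd I.card),
        ((-1 : ℝ) ^ (K + 1) / 4 ^ (K + 1)) *
        ((-1 : ℝ) ^ (K + 1) * (2 * π) ^ (2 * K + 1) / 2 / (Nat.factorial (2 * K + 1) : ℝ) *
          Polynomial.aeval (Int.fract ((∑ i ∈ I, r i - ∑ i ∈ Iᶜ, r i) / (2 * π)))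
            (Polynomial.bernoulli (2 * K + 1)))) := by
    refine HasSum.congr_fun ?_ fun k => hterm k
    exact hasSum_sum fun I _ =>
      (hasSum_sin_shift K hK (∑ i ∈ I, r i - ∑ i ∈ Iᶜ, r i)).mul_left _
  rw [hhs.tsum_eq, Finset.mul_sum, Finset.mul_sum]
  refine Finset.sum_congr rfl fun I _ => ?_
  have hπ : π ≠ 0 := Real.pi_ne_zero
  have hFa : (Nat.factorial (2 * K + 1) : ℝ) ≠ 0 := Nat.cast_ne_zero.mpr (Nat.factorial_ne_zero _)
  have hA : (-1 : ℝ) ^ (K + 1) * (-1 : ℝ) ^ (K + 1) = 1 := by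
    rw [← mul_pow]; norm_num
  have hB : (4 : ℝ) ^ (K + 1) = 2 ^ (2 * (K + 1)) := by
    rw [pow_mul]; norm_num
  have hC : (2 * π) ^ (2 * K + 1) = (2 * π) ^ (2 * K) * (2 * π) := pow_succ _ _
  rw [← mul_assoc, ← mul_assoc]
  congr 1
  rw [hB, hC]
  field_simp
  ring_nf
  rw [show ((-1 : ℝ)) ^ (K * 2) = 1 from by rw [mul_comm, pow_mul, neg_one_sq, one_pow]]
end

section
/- Let n ≥ 4 be an integer and let P be a real number with 0 < P < nπ. For all real numbers x_1, …, x_n with 0 < x_i < π for all i and x_1 + ⋯ + x_n = P, one has Σ_{k=1}^∞ (sin(k x_1)⋯sin(k x_n))/k^{n−2} ≤ Σ_{k=1}^∞ (sin(kP/n))^n/k^{n−2}. That is, among all spherical n-gons with fixed perimeter P, the regular n-gon (all side-lengths equal to P/n) maximizes the symplectic volume of the moduli space of polygons with those side-lengths. -/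
open Real Finset

section AuxPolygonVolume
open MeasureTheory intervalIntegral Set

noncomputable section

def trig (L : List ℝ) (k : ℕ) : ℝ := (L.map (fun y => Real.sin (((k:ℝ)+1)*y))).prod

lemma trig_cons (a : ℝ) (T : List ℝ) (k : ℕ) :
    trig (a :: T) k = Real.sin (((k:ℝ)+1)*a) * trig T k := by simp [trig]

lemma abs_trig_le_one (L : List ℝ) (k : ℕ) : |trig L k| ≤ 1 := by
  induction L with
  | nil => simp [trig]
  | cons a T ih =>
    rw [trig_cons, abs_mul]
    calc |Real.sin (((k:ℝ)+1)*a)| * |trig T k| ≤ 1 * 1 :=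
      mul_le_mul (Real.abs_sin_le_one _) ih (abs_nonneg _) zero_le_one
    _ = 1 := by ring

lemma summable_aux {p : ℕ} (hp : 2 ≤ p) : Summable (fun k : ℕ => 1/((k:ℝ)+1)^p) := by
  have := (summable_one_div_nat_pow (p := p)).2 (by omega)
  have h2 := (summable_nat_add_iff (f := fun n : ℕ => 1/(n:ℝ)^p) 1).2 this
  refine h2.congr fun n => by push_cast; ring_nf

lemma summable_of_abs_le_one {f : ℕ → ℝ} (hf : ∀ k, |f k| ≤ 1) {p : ℕ} (hp : 2 ≤ p) :
    Summable (fun k : ℕ => f k / ((k:ℝ)+1)^p) := by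
  refine Summable.of_norm ?_
  refine Summable.of_nonneg_of_le (fun k => norm_nonneg _) (fun k => ?_) (summable_aux hp)
  have hk : (0:ℝ) < ((k:ℝ)+1)^p := by positivity
  rw [Real.norm_eq_abs, abs_div, abs_of_pos hk, div_le_div_iff₀ hk hk]
  nlinarith [abs_nonneg (f k), hf k]

lemma summable_trig (L : List ℝ) {p : ℕ} (hp : 2 ≤ p) :
    Summable (fun k : ℕ => trig L k / ((k:ℝ)+1)^p) :=
  summable_of_abs_le_one (abs_trig_le_one L) hp

/-- The function `∑ cos((k+1)θ)/(k+1)^2`. -/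
def Cf (θ : ℝ) : ℝ := ∑' k:ℕ, Real.cos (((k:ℝ)+1)*θ)/((k:ℝ)+1)^2

lemma summable_cos (θ : ℝ) : Summable (fun k : ℕ => Real.cos (((k:ℝ)+1)*θ)/((k:ℝ)+1)^2) :=
  summable_of_abs_le_one (fun k => Real.abs_cos_le_one _) le_rfl

lemma hasSum_Cf (θ : ℝ) : HasSum (fun k : ℕ => Real.cos (((k:ℝ)+1)*θ)/((k:ℝ)+1)^2) (Cf θ) :=
  (summable_cos θ).hasSum

lemma Cf_eval {θ : ℝ} (h0 : 0 ≤ θ) (h1 : θ ≤ 2*π) :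
    Cf θ = π^2/6 - π*θ/2 + θ^2/4 := by
  have hπ : (0:ℝ) < π := Real.pi_pos
  have hx : θ/(2*π) ∈ Set.Icc (0:ℝ) 1 := by
    constructor
    · positivity
    · rw [div_le_one (by positivity)]; exact h1
  have H := hasSum_one_div_nat_pow_mul_cos (k := 1) one_ne_zero hx
  have hB : (Polynomial.map (algebraMap ℚ ℝ) (Polynomial.bernoulli (2*1))).eval (θ/(2*π))
      = (θ/(2*π))^2 - (θ/(2*π)) + 1/6 := by
    have : Polynomial.bernoulli 2 = Polynomial.monomial 2 1 - Polynomial.monomial 1 1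
        + Polynomial.C (1/6) := by
      rw [show (2:ℕ) = 1+1 from rfl]
      simp [Polynomial.bernoulli, Finset.sum_range_succ, bernoulli_one, bernoulli_zero,
        bernoulli_eq_bernoulli'_of_ne_one (by norm_num : (2:ℕ) ≠ 1), bernoulli'_two]
      ring
    rw [show 2*1 = 2 from rfl, this]
    simp [Polynomial.eval_monomial]
    try ring
  rw [hB] at H
  -- reindex
  have hzero : (1:ℝ)/(0:ℕ)^(2*1) * Real.cos (2*π*(0:ℕ)*(θ/(2*π))) = 0 := by norm_num
  have H2 := (hasSum_nat_add_iff' (f := fun n : ℕ => 1/(n:ℝ)^(2*1) * Real.cos (2*π*n*(θ/(2*π)))) 1).2 H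
  simp only [Finset.range_one, Finset.sum_singleton] at H2
  rw [hzero, sub_zero] at H2
  have hterm : ∀ k : ℕ, 1/((k+1:ℕ):ℝ)^(2*1) * Real.cos (2*π*((k+1:ℕ):ℝ)*(θ/(2*π)))
      = Real.cos (((k:ℝ)+1)*θ)/((k:ℝ)+1)^2 := by
    intro k
    have : 2*π*((k+1:ℕ):ℝ)*(θ/(2*π)) = ((k:ℝ)+1)*θ := by
      push_cast; field_simp
    rw [this]; push_cast; ring
  simp only [hterm] at H2
  have : Cf θ = (-1:ℝ)^(1+1) * (2*π)^(2*1)/2/(Nat.factorial (2*1)) * ((θ/(2*π))^2 - (θ/(2*π)) + 1/6) :=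
    H2.tsum_eq
  rw [this]
  have h2 : ((Nat.factorial (2*1) : ℕ) : ℝ) = 2 := by norm_num [Nat.factorial]
  rw [h2]
  field_simp
  ring


lemma Cf_neg (θ : ℝ) : Cf (-θ) = Cf θ := by
  unfold Cf; apply tsum_congr; intro k; rw [mul_neg, Real.cos_neg]

lemma Cf_per (θ : ℝ) : Cf (θ + 2*π) = Cf θ := by
  unfold Cf; apply tsum_congr; intro k
  rw [mul_add, show ((k:ℝ)+1)*(2*π) = ((k+1 : ℤ) : ℝ)*(2*π) by push_cast; ring,
    Real.cos_add_int_mul_two_pi]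

lemma Cf_pair (a b : ℝ) : Cf (a-b) + Cf (a+b) = Cf (|a|-|b|) + Cf (|a|+|b|) := by
  rcases abs_cases a with ⟨ha, _⟩ | ⟨ha, _⟩ <;> rcases abs_cases b with ⟨hb, _⟩ | ⟨hb, _⟩ <;>
    rw [ha, hb]
  · rw [show -b = -(b) by ring] at *
    rw [show a - -b = a + b by ring, show a + -b = a - b by ring, add_comm]
  · rw [show -a - b = -(a+b) by ring, show -a + b = -(a-b) by ring, Cf_neg, Cf_neg, add_comm]
  · rw [show -a - -b = -(a-b) by ring, show -a + -b = -(a+b) by ring, Cf_neg, Cf_neg]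

lemma Cf_pair_eval {s t : ℝ} (hs0 : 0 ≤ s) (hs : s ≤ 2*π) (ht0 : 0 ≤ t) (ht : t ≤ 2*π) :
    Cf (s-t) + Cf (s+t) = π^2/3 + (s^2+t^2)/2 - π*(max s t + max 0 (s+t-2*π)) := by
  rcases le_total (s+t) (2*π) with hst | hst
  · have h0 : max (0:ℝ) (s+t-2*π) = 0 := max_eq_left (by linarith)
    rcases le_total t s with h | h
    · rw [Cf_eval (by linarith) (by linarith), Cf_eval (by linarith) hst, h0,
        max_eq_left h]; ring
    · rw [show s - t = -(t-s) by ring, Cf_neg, Cf_eval (by linarith) (by linarith),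
        Cf_eval (by linarith) hst, h0, max_eq_right h]; ring
  · have h0 : max (0:ℝ) (s+t-2*π) = s+t-2*π := max_eq_right (by linarith)
    have hper : Cf (s+t) = Cf (s+t-2*π) := by
      have := Cf_per (s+t-2*π)
      rw [show s+t-2*π+2*π = s+t by ring] at this
      exact this
    rcases le_total t s with h | h
    · rw [hper, Cf_eval (by linarith) (by linarith), Cf_eval (by linarith) (by linarith), h0,
        max_eq_left h]; ring
    · rw [show s - t = -(t-s) by ring, Cf_neg, hper, Cf_eval (by linarith) (by linarith),
        Cf_eval (by linarith) (by linarith), h0, max_eq_right h]; ring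

lemma key4 {u v b d : ℝ} (hu0 : 0 ≤ u) (hub : u ≤ b) (hub' : u ≤ 2*π - b)
    (hv0 : 0 ≤ v) (hvd : v ≤ d) (hvd' : v ≤ 2*π - d) (hb : b ≤ 2*π) (hd : d ≤ 2*π) :
    max u v + max 0 (u+v-2*π) + (max b d + max 0 (b+d-2*π)) ≤
      max u d + max 0 (u+d-2*π) + (max b v + max 0 (b+v-2*π)) := by
  have hπ : 0 < π := Real.pi_pos
  simp only [max_def]
  split_ifs <;> linarith

lemma four_sin (K a b c d : ℝ) :
    Real.sin (K*a) * Real.sin (K*b) * (Real.sin (K*c) * Real.sin (K*d)) =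
      (Real.cos (K*((a-b)-(c-d))) + Real.cos (K*((a-b)+(c-d)))
        + Real.cos (K*((a+b)-(c+d))) + Real.cos (K*((a+b)+(c+d)))
        - Real.cos (K*((a-b)-(c+d))) - Real.cos (K*((a-b)+(c+d)))
        - Real.cos (K*((a+b)-(c-d))) - Real.cos (K*((a+b)+(c-d))))/8 := by
  simp only [mul_sub, mul_add, Real.cos_sub, Real.cos_add, Real.sin_sub, Real.sin_add]
  ring

lemma lemA4 {y1 y2 y3 y4 : ℝ} (h1 : y1 ∈ Set.Icc 0 π) (h2 : y2 ∈ Set.Icc 0 π)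
    (h3 : y3 ∈ Set.Icc 0 π) (h4 : y4 ∈ Set.Icc 0 π) :
    0 ≤ ∑' k : ℕ, trig [y1, y2, y3, y4] k / ((k:ℝ)+1)^2 := by
  have hπ : 0 < π := Real.pi_pos
  obtain ⟨h1a, h1b⟩ := h1; obtain ⟨h2a, h2b⟩ := h2
  obtain ⟨h3a, h3b⟩ := h3; obtain ⟨h4a, h4b⟩ := h4
  -- the combined HasSum
  have H : HasSum (fun k : ℕ => trig [y1, y2, y3, y4] k / ((k:ℝ)+1)^2)
      ((Cf ((y1-y2)-(y3-y4)) + Cf ((y1-y2)+(y3-y4)) + Cf ((y1+y2)-(y3+y4)) + Cf ((y1+y2)+(y3+y4))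
        - Cf ((y1-y2)-(y3+y4)) - Cf ((y1-y2)+(y3+y4)) - Cf ((y1+y2)-(y3-y4))
        - Cf ((y1+y2)+(y3-y4)))/8) := by
    have H0 := (((((((hasSum_Cf ((y1-y2)-(y3-y4))).add (hasSum_Cf ((y1-y2)+(y3-y4)))).add
      (hasSum_Cf ((y1+y2)-(y3+y4)))).add (hasSum_Cf ((y1+y2)+(y3+y4)))).sub
      (hasSum_Cf ((y1-y2)-(y3+y4)))).sub (hasSum_Cf ((y1-y2)+(y3+y4)))).sub
      (hasSum_Cf ((y1+y2)-(y3-y4)))).sub (hasSum_Cf ((y1+y2)+(y3-y4)))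
    have H1 := H0.div_const 8
    refine H1.congr_fun ?_
    intro k
    have hK : ((k:ℝ)+1)^2 ≠ 0 := by positivity
    have := four_sin ((k:ℝ)+1) y1 y2 y3 y4
    simp only [trig, List.map, List.prod_cons, List.prod_nil, mul_one]
    rw [← mul_assoc]
    rw [this]
    ring
  rw [H.tsum_eq]
  have e1 : Cf ((y1-y2)-(y3-y4)) + Cf ((y1-y2)+(y3-y4))
      = Cf (|y1-y2|-|y3-y4|) + Cf (|y1-y2|+|y3-y4|) := Cf_pair _ _
  have e2 : Cf ((y1-y2)-(y3+y4)) + Cf ((y1-y2)+(y3+y4))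
      = Cf (|y1-y2|-|y3+y4|) + Cf (|y1-y2|+|y3+y4|) := Cf_pair _ _
  have e3 : Cf ((y1+y2)-(y3-y4)) + Cf ((y1+y2)+(y3-y4))
      = Cf (|y1+y2|-|y3-y4|) + Cf (|y1+y2|+|y3-y4|) := Cf_pair _ _
  have habs12 : |y1+y2| = y1+y2 := abs_of_nonneg (by linarith)
  have habs34 : |y3+y4| = y3+y4 := abs_of_nonneg (by linarith)
  rw [habs34] at e2; rw [habs12] at e3
  set u := |y1-y2| with hu
  set v := |y3-y4| with hv
  have hu0 : 0 ≤ u := abs_nonneg _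
  have hv0 : 0 ≤ v := abs_nonneg _
  have hub : u ≤ y1+y2 := by rw [hu]; rw [abs_le]; constructor <;> linarith
  have hub' : u ≤ 2*π - (y1+y2) := by rw [hu]; rw [abs_le]; constructor <;> linarith
  have hvd : v ≤ y3+y4 := by rw [hv]; rw [abs_le]; constructor <;> linarith
  have hvd' : v ≤ 2*π - (y3+y4) := by rw [hv]; rw [abs_le]; constructor <;> linarith
  have huπ : u ≤ π := by linarith
  have hvπ : v ≤ π := by linarith
  have hb2 : y1+y2 ≤ 2*π := by linarith
  have hd2 : y3+y4 ≤ 2*π := by linarith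
  have E1 := Cf_pair_eval hu0 (by linarith) hv0 (by linarith)
  have E2 := Cf_pair_eval hu0 (by linarith) (show (0:ℝ) ≤ y3+y4 by linarith) hd2
  have E3 := Cf_pair_eval (show (0:ℝ) ≤ y1+y2 by linarith) hb2 hv0 (by linarith)
  have E4 := Cf_pair_eval (show (0:ℝ) ≤ y1+y2 by linarith) hb2 (show (0:ℝ) ≤ y3+y4 by linarith) hd2
  have K := key4 hu0 hub hub' hv0 hvd hvd' hb2 hd2
  have expand : Cf ((y1-y2)-(y3-y4)) + Cf ((y1-y2)+(y3-y4)) + Cf ((y1+y2)-(y3+y4))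
        + Cf ((y1+y2)+(y3+y4)) - Cf ((y1-y2)-(y3+y4)) - Cf ((y1-y2)+(y3+y4))
        - Cf ((y1+y2)-(y3-y4)) - Cf ((y1+y2)+(y3-y4))
      = π*((max u (y3+y4) + max 0 (u+(y3+y4)-2*π)) + (max (y1+y2) v + max 0 ((y1+y2)+v-2*π))
          - (max u v + max 0 (u+v-2*π)) - (max (y1+y2) (y3+y4) + max 0 ((y1+y2)+(y3+y4)-2*π))) := by
    have c1 : Cf ((y1-y2)-(y3-y4)) + Cf ((y1-y2)+(y3-y4)) = Cf (u-v) + Cf (u+v) := e1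
    have c2 : Cf ((y1-y2)-(y3+y4)) + Cf ((y1-y2)+(y3+y4)) = Cf (u-(y3+y4)) + Cf (u+(y3+y4)) := e2
    have c3 : Cf ((y1+y2)-(y3-y4)) + Cf ((y1+y2)+(y3-y4)) = Cf ((y1+y2)-v) + Cf ((y1+y2)+v) := e3
    rw [show Cf ((y1-y2)-(y3-y4)) + Cf ((y1-y2)+(y3-y4)) + Cf ((y1+y2)-(y3+y4))
        + Cf ((y1+y2)+(y3+y4)) - Cf ((y1-y2)-(y3+y4)) - Cf ((y1-y2)+(y3+y4))
        - Cf ((y1+y2)-(y3-y4)) - Cf ((y1+y2)+(y3-y4))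
      = (Cf ((y1-y2)-(y3-y4)) + Cf ((y1-y2)+(y3-y4)))
        + (Cf ((y1+y2)-(y3+y4)) + Cf ((y1+y2)+(y3+y4)))
        - (Cf ((y1-y2)-(y3+y4)) + Cf ((y1-y2)+(y3+y4)))
        - (Cf ((y1+y2)-(y3-y4)) + Cf ((y1+y2)+(y3-y4))) by ring, c1, c2, c3, E1, E2, E3, E4]
    ring
  rw [expand]
  have : 0 ≤ (max u (y3+y4) + max 0 (u+(y3+y4)-2*π)) + (max (y1+y2) v + max 0 ((y1+y2)+v-2*π))
      - (max u v + max 0 (u+v-2*π)) - (max (y1+y2) (y3+y4) + max 0 ((y1+y2)+(y3+y4)-2*π)) := by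
    linarith
  positivity

lemma sin_mul_sin (A B : ℝ) : Real.sin A * Real.sin B = (Real.cos (A-B) - Real.cos (A+B))/2 := by
  rw [Real.cos_sub, Real.cos_add]; ring

lemma cosK_two_pi_sub (k : ℕ) (x : ℝ) :
    Real.cos (((k:ℝ)+1)*(2*π - x)) = Real.cos (((k:ℝ)+1)*x) := by
  have : ((k:ℝ)+1)*(2*π - x) = ((k+1:ℕ):ℝ)*(2*π) - ((k:ℝ)+1)*x := by push_cast; ring
  rw [this, Real.cos_nat_mul_two_pi_sub]

/-- step function used in the induction -/
def stepf (y1 y2 : ℝ) : ℝ → ℝ := fun θ =>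
  if θ ∈ Set.Ioo |y1-y2| (min (y1+y2) (2*π-(y1+y2))) then π/4
  else if θ ∈ Set.Ioo (2*π - min (y1+y2) (2*π-(y1+y2))) (2*π - |y1-y2|) then -π/4 else 0

variable {y1 y2 : ℝ}

lemma stepf_abs_le (θ : ℝ) : |stepf y1 y2 θ| ≤ π := by
  have hπ : 0 < π := Real.pi_pos
  unfold stepf
  split_ifs
  · rw [abs_of_nonneg (by positivity)]; linarith
  · rw [abs_of_nonpos (by linarith)]; linarith
  · rw [abs_zero]; linarith

lemma stepf_measurable : Measurable (stepf y1 y2) := by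
  unfold stepf
  exact (measurable_const.ite measurableSet_Ioo
    (measurable_const.ite measurableSet_Ioo measurable_const))

lemma stepf_nonneg (h1 : y1 ∈ Set.Icc 0 π) (h2 : y2 ∈ Set.Icc 0 π) {θ : ℝ}
    (hθ : θ ∈ Set.Icc 0 π) : 0 ≤ stepf y1 y2 θ := by
  have hπ : 0 < π := Real.pi_pos
  obtain ⟨ha, hb⟩ := h1; obtain ⟨hc, hd⟩ := h2; obtain ⟨hθ1, hθ2⟩ := hθ
  unfold stepf
  have hm : min (y1+y2) (2*π-(y1+y2)) ≤ π := by
    rcases le_total (y1+y2) (2*π-(y1+y2)) with h | h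
    · rw [min_eq_left h]; linarith
    · rw [min_eq_right h]; linarith
  split_ifs with hA hB
  · positivity
  · exfalso; obtain ⟨hB1, _⟩ := hB; linarith
  · exact le_rfl

lemma stepf_nonpos (h1 : y1 ∈ Set.Icc 0 π) (h2 : y2 ∈ Set.Icc 0 π) {θ : ℝ}
    (hθ : θ ∈ Set.Icc π (2*π)) : stepf y1 y2 θ ≤ 0 := by
  have hπ : 0 < π := Real.pi_pos
  obtain ⟨ha, hb⟩ := h1; obtain ⟨hc, hd⟩ := h2; obtain ⟨hθ1, hθ2⟩ := hθ
  unfold stepf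
  have hm : min (y1+y2) (2*π-(y1+y2)) ≤ π := by
    rcases le_total (y1+y2) (2*π-(y1+y2)) with h | h
    · rw [min_eq_left h]; linarith
    · rw [min_eq_right h]; linarith
  split_ifs with hA hB
  · exfalso; obtain ⟨_, hA2⟩ := hA; linarith
  · linarith
  · exact le_rfl

lemma stepf_integral (h1 : y1 ∈ Set.Icc 0 π) (h2 : y2 ∈ Set.Icc 0 π) (k : ℕ) :
    ∫ θ in Set.Ioc 0 (2*π), stepf y1 y2 θ * Real.sin (((k:ℝ)+1)*θ)
      = π * (Real.sin (((k:ℝ)+1)*y1) * Real.sin (((k:ℝ)+1)*y2)) / ((k:ℝ)+1) := by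
  have hπ : 0 < π := Real.pi_pos
  obtain ⟨ha, hb⟩ := h1; obtain ⟨hc, hd⟩ := h2
  set a := |y1-y2| with hadef
  set m := min (y1+y2) (2*π-(y1+y2)) with hmdef
  have ha0 : 0 ≤ a := abs_nonneg _
  have hm2 : m ≤ π := by
    rcases le_total (y1+y2) (2*π-(y1+y2)) with h | h
    · rw [hmdef, min_eq_left h]; linarith
    · rw [hmdef, min_eq_right h]; linarith
  have hK : (0:ℝ) < (k:ℝ)+1 := by positivity
  rcases le_or_gt m a with hma | ham
  · -- degenerate case : integrand vanishes, RHS vanishes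
    have hzero : ∀ θ, stepf y1 y2 θ = 0 := by
      intro θ; unfold stepf
      split_ifs with hA hB
      · exfalso; obtain ⟨u1, u2⟩ := hA; linarith
      · exfalso; obtain ⟨u1, u2⟩ := hB; linarith
      · rfl
    have hrhs : Real.sin (((k:ℝ)+1)*y1) * Real.sin (((k:ℝ)+1)*y2) = 0 := by
      rcases min_cases (y1+y2) (2*π-(y1+y2)) with ⟨he, _⟩ | ⟨he, _⟩
      · -- y1 + y2 ≤ |y1 - y2| : min y1 y2 = 0
        rw [hmdef, he] at hma
        rcases abs_cases (y1-y2) with ⟨hq, _⟩ | ⟨hq, _⟩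
        · have : y2 = 0 := by rw [hadef, hq] at hma; linarith
          rw [this, mul_zero, Real.sin_zero, mul_zero]
        · have : y1 = 0 := by rw [hadef, hq] at hma; linarith
          rw [this, mul_zero, Real.sin_zero, zero_mul]
      · -- 2π - (y1+y2) ≤ |y1-y2| : max y1 y2 = π
        rw [hmdef, he] at hma
        rcases abs_cases (y1-y2) with ⟨hq, _⟩ | ⟨hq, _⟩
        · have : y1 = π := by rw [hadef, hq] at hma; linarith
          rw [this, show ((k:ℝ)+1)*π = ((k+1:ℕ):ℝ)*π by push_cast; ring,
            Real.sin_nat_mul_pi, zero_mul]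
        · have : y2 = π := by rw [hadef, hq] at hma; linarith
          rw [this, show ((k:ℝ)+1)*π = ((k+1:ℕ):ℝ)*π by push_cast; ring,
            Real.sin_nat_mul_pi, mul_zero]
    simp [hzero, hrhs]
  · -- main case
    have hsub1 : Set.Ioo a m ⊆ Set.Ioc 0 (2*π) := fun θ hθ =>
      ⟨lt_of_le_of_lt ha0 hθ.1, le_trans (le_of_lt hθ.2) (by linarith)⟩
    have hsub2 : Set.Ioo (2*π-m) (2*π-a) ⊆ Set.Ioc 0 (2*π) := fun θ hθ =>
      ⟨by have := hθ.1; linarith, by have := hθ.2; linarith⟩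
    have hdisj : ∀ θ, θ ∈ Set.Ioo a m → θ ∈ Set.Ioo (2*π-m) (2*π-a) → False := by
      intro θ hA hB; have := hA.2; have := hB.1; linarith
    have hsplit : ∀ θ, stepf y1 y2 θ * Real.sin (((k:ℝ)+1)*θ)
        = Set.indicator (Set.Ioo a m) (fun θ => (π/4) * Real.sin (((k:ℝ)+1)*θ)) θ
          + Set.indicator (Set.Ioo (2*π-m) (2*π-a))
            (fun θ => (-(π/4)) * Real.sin (((k:ℝ)+1)*θ)) θ := by
      intro θ
      unfold stepf
      rcases Classical.em (θ ∈ Set.Ioo a m) with hA | hA <;>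
        rcases Classical.em (θ ∈ Set.Ioo (2*π-m) (2*π-a)) with hB | hB
      · exact absurd hB (fun h => hdisj θ hA h)
      · rw [Set.indicator_of_mem hA, Set.indicator_of_notMem hB, if_pos hA]; ring
      · rw [Set.indicator_of_notMem hA, Set.indicator_of_mem hB, if_neg hA, if_pos hB]; ring
      · rw [Set.indicator_of_notMem hA, Set.indicator_of_notMem hB, if_neg hA, if_neg hB]; ring
    have hInt1 : Integrable (Set.indicator (Set.Ioo a m)
        (fun θ => (π/4) * Real.sin (((k:ℝ)+1)*θ))) (volume.restrict (Set.Ioc 0 (2*π))) := by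
      rw [integrable_indicator_iff measurableSet_Ioo]
      exact (((Continuous.continuousOn (by fun_prop)).integrableOn_compact
        isCompact_Icc).mono_set Set.Ioo_subset_Icc_self)
    have hInt2 : Integrable (Set.indicator (Set.Ioo (2*π-m) (2*π-a))
        (fun θ => (-(π/4)) * Real.sin (((k:ℝ)+1)*θ))) (volume.restrict (Set.Ioc 0 (2*π))) := by
      rw [integrable_indicator_iff measurableSet_Ioo]
      exact (((Continuous.continuousOn (by fun_prop)).integrableOn_compact
        isCompact_Icc).mono_set Set.Ioo_subset_Icc_self)
    have keyint : ∀ c d : ℝ, c ≤ d → ∫ θ in Set.Ioo c d, Real.sin (((k:ℝ)+1)*θ)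
        = (Real.cos (((k:ℝ)+1)*c) - Real.cos (((k:ℝ)+1)*d))/((k:ℝ)+1) := by
      intro c d hcd
      rw [← MeasureTheory.integral_Ioc_eq_integral_Ioo, ← intervalIntegral.integral_of_le hcd]
      rw [intervalIntegral.integral_comp_mul_left (fun x => Real.sin x) (by positivity : ((k:ℝ)+1) ≠ 0)]
      rw [integral_sin]
      simp [smul_eq_mul]
      ring
    calc ∫ θ in Set.Ioc 0 (2*π), stepf y1 y2 θ * Real.sin (((k:ℝ)+1)*θ)
        = ∫ θ in Set.Ioc 0 (2*π), (Set.indicator (Set.Ioo a m)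
            (fun θ => (π/4) * Real.sin (((k:ℝ)+1)*θ)) θ
          + Set.indicator (Set.Ioo (2*π-m) (2*π-a))
            (fun θ => (-(π/4)) * Real.sin (((k:ℝ)+1)*θ)) θ) := by
          apply MeasureTheory.integral_congr_ae
          exact Filter.Eventually.of_forall hsplit
      _ = (∫ θ in Set.Ioc 0 (2*π), Set.indicator (Set.Ioo a m)
            (fun θ => (π/4) * Real.sin (((k:ℝ)+1)*θ)) θ)
          + ∫ θ in Set.Ioc 0 (2*π), Set.indicator (Set.Ioo (2*π-m) (2*π-a))
            (fun θ => (-(π/4)) * Real.sin (((k:ℝ)+1)*θ)) θ :=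
          MeasureTheory.integral_add hInt1 hInt2
      _ = (∫ θ in Set.Ioo a m, (π/4) * Real.sin (((k:ℝ)+1)*θ))
          + ∫ θ in Set.Ioo (2*π-m) (2*π-a), (-(π/4)) * Real.sin (((k:ℝ)+1)*θ) := by
          rw [MeasureTheory.integral_indicator measurableSet_Ioo,
            MeasureTheory.integral_indicator measurableSet_Ioo,
            Measure.restrict_restrict measurableSet_Ioo,
            Measure.restrict_restrict measurableSet_Ioo,
            Set.inter_eq_self_of_subset_left hsub1, Set.inter_eq_self_of_subset_left hsub2]
      _ = (π/4) * ((Real.cos (((k:ℝ)+1)*a) - Real.cos (((k:ℝ)+1)*m))/((k:ℝ)+1))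
          + (-(π/4)) * ((Real.cos (((k:ℝ)+1)*(2*π-m)) - Real.cos (((k:ℝ)+1)*(2*π-a)))/((k:ℝ)+1)) := by
          rw [MeasureTheory.integral_const_mul, MeasureTheory.integral_const_mul,
            keyint a m (le_of_lt ham), keyint (2*π-m) (2*π-a) (by linarith)]
      _ = π * (Real.sin (((k:ℝ)+1)*y1) * Real.sin (((k:ℝ)+1)*y2)) / ((k:ℝ)+1) := by
          rw [cosK_two_pi_sub k m, cosK_two_pi_sub k a, sin_mul_sin]
          have hca : Real.cos (((k:ℝ)+1)*a) = Real.cos (((k:ℝ)+1)*(y1-y2)) := by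
            rcases abs_cases (y1-y2) with ⟨hq, _⟩ | ⟨hq, _⟩
            · rw [hadef, hq]
            · rw [hadef, hq, mul_neg, Real.cos_neg]
          have hcm : Real.cos (((k:ℝ)+1)*m) = Real.cos (((k:ℝ)+1)*(y1+y2)) := by
            rcases min_cases (y1+y2) (2*π-(y1+y2)) with ⟨he, _⟩ | ⟨he, _⟩
            · rw [hmdef, he]
            · rw [hmdef, he, cosK_two_pi_sub]
          rw [hca, hcm]
          rw [show ((k:ℝ)+1)*(y1-y2) = ((k:ℝ)+1)*y1 - ((k:ℝ)+1)*y2 by ring,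
            show ((k:ℝ)+1)*(y1+y2) = ((k:ℝ)+1)*y1 + ((k:ℝ)+1)*y2 by ring]
          field_simp
          ring

lemma lemA : ∀ (n : ℕ), 4 ≤ n → ∀ L : List ℝ, L.length = n → (∀ y ∈ L, y ∈ Set.Icc 0 π) →
    0 ≤ ∑' k : ℕ, trig L k / ((k:ℝ)+1)^(n-2) := by
  intro n hn
  induction n, hn using Nat.le_induction with
  | base =>
    intro L hL hmem
    rcases L with _ | ⟨a, _ | ⟨b, _ | ⟨c, _ | ⟨d, _ | ⟨e, t⟩⟩⟩⟩⟩ <;> simp_all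
    exact lemA4 hmem.1 hmem.2.1 hmem.2.2.1 hmem.2.2.2
  | succ n hn IH =>
    intro L hL hmem
    have hπ : 0 < π := Real.pi_pos
    rcases L with _ | ⟨y1, _ | ⟨y2, T⟩⟩
    · simp at hL
    · simp at hL; omega
    have hT : T.length = n - 1 := by simp at hL; omega
    have h1 : y1 ∈ Set.Icc 0 π := hmem y1 (by simp)
    have h2 : y2 ∈ Set.Icc 0 π := hmem y2 (by simp)
    have hTmem : ∀ y ∈ T, y ∈ Set.Icc 0 π := fun y hy => hmem y (by simp [hy])
    -- the lower-order series
    set g : ℝ → ℝ := fun θ => ∑' k : ℕ, trig (θ :: T) k / ((k:ℝ)+1)^(n-2) with hg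
    have hglen : ∀ θ : ℝ, (θ :: T).length = n := by intro θ; simp [hT]; omega
    have hgnonneg : ∀ θ ∈ Set.Icc (0:ℝ) π, 0 ≤ g θ := by
      intro θ hθ
      exact IH (θ :: T) (hglen θ) (by
        intro y hy
        rcases List.mem_cons.mp hy with h | h
        · exact h ▸ hθ
        · exact hTmem y h)
    have hgodd : ∀ θ : ℝ, g (2*π - θ) = -g θ := by
      intro θ
      rw [hg, ← tsum_neg]
      apply tsum_congr
      intro k
      rw [trig_cons, trig_cons]
      have : Real.sin (((k:ℝ)+1)*(2*π - θ)) = -Real.sin (((k:ℝ)+1)*θ) := by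
        have e : ((k:ℝ)+1)*(2*π - θ) = ((k+1:ℕ):ℝ)*(2*π) - ((k:ℝ)+1)*θ := by push_cast; ring
        rw [e, Real.sin_nat_mul_two_pi_sub]
      rw [this]; ring
    -- the integrand family
    set F : ℕ → ℝ → ℝ := fun k θ =>
      stepf y1 y2 θ * Real.sin (((k:ℝ)+1)*θ) * (trig T k / ((k:ℝ)+1)^(n-2)) with hF
    have hexp : n + 1 - 2 = (n - 2) + 1 := by omega
    have hterm : ∀ k : ℕ, trig (y1 :: y2 :: T) k / ((k:ℝ)+1)^(n+1-2)
        = (1/π) * ∫ θ in Set.Ioc 0 (2*π), F k θ := by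
      intro k
      have hK : (0:ℝ) < (k:ℝ)+1 := by positivity
      rw [hF]
      simp only []
      rw [MeasureTheory.integral_mul_const, stepf_integral h1 h2 k]
      rw [trig_cons, trig_cons, hexp, pow_succ]
      field_simp
    have hmeas : ∀ k : ℕ, AEStronglyMeasurable (F k) (volume.restrict (Set.Ioc 0 (2*π))) := by
      intro k
      exact ((stepf_measurable.mul (by fun_prop)).mul_const _).aestronglyMeasurable
    have hbound : ∀ k θ, ‖F k θ‖ ≤ π / ((k:ℝ)+1)^(n-2) := by
      intro k θ
      have hK : (0:ℝ) < ((k:ℝ)+1)^(n-2) := by positivity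
      rw [hF]
      simp only [Real.norm_eq_abs]
      rw [abs_mul, abs_mul, abs_div, abs_of_pos hK]
      have b1 := stepf_abs_le (y1 := y1) (y2 := y2) θ
      have b2 := Real.abs_sin_le_one (((k:ℝ)+1)*θ)
      have b3 := abs_trig_le_one T k
      have n1 : 0 ≤ |stepf y1 y2 θ| := abs_nonneg _
      have n2 : 0 ≤ |Real.sin (((k:ℝ)+1)*θ)| := abs_nonneg _
      have n3 : 0 ≤ |trig T k| := abs_nonneg _
      calc |stepf y1 y2 θ| * |Real.sin (((k:ℝ)+1)*θ)| * (|trig T k| / ((k:ℝ)+1)^(n-2))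
          ≤ π * 1 * (1 / ((k:ℝ)+1)^(n-2)) := by
            apply mul_le_mul
            · exact mul_le_mul b1 b2 n2 (le_of_lt hπ)
            · gcongr
            · positivity
            · positivity
        _ = π / ((k:ℝ)+1)^(n-2) := by ring
    have hsum_u : Summable (fun k : ℕ => π / ((k:ℝ)+1)^(n-2) * (2*π)) := by
      have := (summable_aux (p := n-2) (by omega)).mul_left π
      exact (this.mul_right (2*π)).congr (fun k => by ring)
    have hlint : ∑' k : ℕ, ∫⁻ θ, ‖F k θ‖₊ ∂(volume.restrict (Set.Ioc 0 (2*π))) ≠ ⊤ := by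
      have hle : ∀ k : ℕ, ∫⁻ θ, ‖F k θ‖₊ ∂(volume.restrict (Set.Ioc 0 (2*π)))
          ≤ ENNReal.ofReal (π / ((k:ℝ)+1)^(n-2) * (2*π)) := by
        intro k
        have : ∫⁻ θ, ‖F k θ‖₊ ∂(volume.restrict (Set.Ioc 0 (2*π)))
            ≤ ∫⁻ _, ENNReal.ofReal (π / ((k:ℝ)+1)^(n-2)) ∂(volume.restrict (Set.Ioc 0 (2*π))) := by
          apply lintegral_mono
          intro θ
          simp only [← enorm_eq_nnnorm, ← ofReal_norm]
          exact ENNReal.ofReal_le_ofReal (hbound k θ)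
        rw [lintegral_const] at this
        refine this.trans ?_
        rw [Measure.restrict_apply_univ, Real.volume_Ioc,
          ← ENNReal.ofReal_mul (by positivity)]
        apply ENNReal.ofReal_le_ofReal
        nlinarith [sq_nonneg π]
      have hne : ∑' k : ℕ, ENNReal.ofReal (π / ((k:ℝ)+1)^(n-2) * (2*π)) ≠ ⊤ := by
        rw [← ENNReal.ofReal_tsum_of_nonneg (fun k => by positivity) hsum_u]
        exact ENNReal.ofReal_ne_top
      exact ne_top_of_le_ne_top hne (ENNReal.tsum_le_tsum hle)
    -- interchange
    have hinter : ∑' k : ℕ, ∫ θ in Set.Ioc 0 (2*π), F k θ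
        = ∫ θ in Set.Ioc 0 (2*π), ∑' k : ℕ, F k θ :=
      (MeasureTheory.integral_tsum hmeas hlint).symm
    have hinner : ∀ θ : ℝ, ∑' k : ℕ, F k θ = stepf y1 y2 θ * g θ := by
      intro θ
      rw [hg, ← tsum_mul_left]
      apply tsum_congr
      intro k
      rw [hF, trig_cons]
      ring
    have hsign : ∀ θ ∈ Set.Ioc (0:ℝ) (2*π), 0 ≤ stepf y1 y2 θ * g θ := by
      intro θ hθ
      rcases le_total θ π with hcase | hcase
      · exact mul_nonneg (stepf_nonneg h1 h2 ⟨le_of_lt hθ.1, hcase⟩)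
          (hgnonneg θ ⟨le_of_lt hθ.1, hcase⟩)
      · have hs := stepf_nonpos h1 h2 ⟨hcase, hθ.2⟩
        have hgle : g θ ≤ 0 := by
          have := hgodd (2*π - θ)
          rw [show 2*π - (2*π - θ) = θ by ring] at this
          rw [this]
          simp only [neg_nonpos]
          exact hgnonneg _ ⟨by linarith [hθ.2], by linarith⟩
        nlinarith [mul_nonneg (neg_nonneg.2 hs) (neg_nonneg.2 hgle)]
    calc (0:ℝ) ≤ (1/π) * ∫ θ in Set.Ioc 0 (2*π), stepf y1 y2 θ * g θ := by
          apply mul_nonneg (by positivity)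
          exact MeasureTheory.setIntegral_nonneg measurableSet_Ioc hsign
      _ = (1/π) * ∫ θ in Set.Ioc 0 (2*π), ∑' k : ℕ, F k θ := by
          congr 1
          exact MeasureTheory.integral_congr_ae (Filter.Eventually.of_forall
            (fun θ => (hinner θ).symm))
      _ = (1/π) * ∑' k : ℕ, ∫ θ in Set.Ioc 0 (2*π), F k θ := by rw [hinter]
      _ = ∑' k : ℕ, trig (y1 :: y2 :: T) k / ((k:ℝ)+1)^(n+1-2) := by
          rw [← tsum_mul_left]
          exact (tsum_congr hterm).symm

variable {n : ℕ}

/-- the series as a function of the side-length vector -/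
def Sfun (n : ℕ) (x : Fin n → ℝ) : ℝ :=
  ∑' k : ℕ, (∏ i, Real.sin (((k:ℝ)+1) * x i)) / ((k:ℝ)+1)^(n-2)

lemma abs_prod_sin_le_one (x : Fin n → ℝ) (k : ℕ) :
    |∏ i, Real.sin (((k:ℝ)+1) * x i)| ≤ 1 := by
  rw [Finset.abs_prod]
  apply Finset.prod_le_one
  · intro i _; exact abs_nonneg _
  · intro i _; exact Real.abs_sin_le_one _

lemma summable_Sfun (x : Fin n → ℝ) (hn : 4 ≤ n) :
    Summable (fun k : ℕ => (∏ i, Real.sin (((k:ℝ)+1) * x i)) / ((k:ℝ)+1)^(n-2)) :=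
  summable_of_abs_le_one (abs_prod_sin_le_one x) (by omega)

lemma lemA_fin (hn : 4 ≤ n) (x : Fin n → ℝ) (hx : ∀ i, x i ∈ Set.Icc 0 π) :
    0 ≤ Sfun n x := by
  have h := lemA n hn (List.ofFn x) List.length_ofFn (by
    intro y hy
    rw [List.mem_ofFn] at hy
    obtain ⟨i, rfl⟩ := hy
    exact hx i)
  have e : ∀ k : ℕ, trig (List.ofFn x) k = ∏ i, Real.sin (((k:ℝ)+1) * x i) := by
    intro k
    rw [trig, List.map_ofFn, List.prod_ofFn]
    rfl
  rw [Sfun]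
  rw [show (fun k : ℕ => (∏ i, Real.sin (((k:ℝ)+1) * x i)) / ((k:ℝ)+1)^(n-2))
    = (fun k : ℕ => trig (List.ofFn x) k / ((k:ℝ)+1)^(n-2)) by funext k; rw [e]]
  exact h

lemma continuous_Sfun (hn : 4 ≤ n) : Continuous (Sfun n) := by
  apply continuous_tsum (u := fun k : ℕ => 1/((k:ℝ)+1)^(n-2))
  · intro k
    apply Continuous.div_const
    exact continuous_finset_prod _ (fun i _ => (Real.continuous_sin.comp (by fun_prop)))
  · exact summable_aux (by omega)
  · intro k x
    have hK : (0:ℝ) < ((k:ℝ)+1)^(n-2) := by positivity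
    rw [Real.norm_eq_abs, abs_div, abs_of_pos hK, div_le_div_iff₀ hK hK]
    nlinarith [abs_prod_sin_le_one x k, abs_nonneg (∏ i, Real.sin (((k:ℝ)+1) * x i))]

lemma prod_two_update {i j : Fin n} (hij : j ≠ i) (z : Fin n → ℝ) (a b : ℝ) (f : ℝ → ℝ) :
    ∏ l, f (Function.update (Function.update z i a) j b l)
      = f a * (f b * ∏ l ∈ (Finset.univ.erase i).erase j, f (z l)) := by
  have hj : j ∈ Finset.univ.erase i := Finset.mem_erase.2 ⟨hij, Finset.mem_univ j⟩
  rw [← Finset.mul_prod_erase Finset.univ _ (Finset.mem_univ i)]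
  rw [← Finset.mul_prod_erase (Finset.univ.erase i) _ hj]
  have herase : Finset.erase (Finset.univ.erase i) j = (Finset.univ.erase i).erase j := rfl
  congr 1
  · rw [Function.update_of_ne (Ne.symm hij), Function.update_self]
  congr 1
  · rw [Function.update_self]
  apply Finset.prod_congr rfl
  intro l hl
  obtain ⟨hlj, hli⟩ := Finset.mem_erase.1 hl
  obtain ⟨hli', _⟩ := Finset.mem_erase.1 hli
  rw [Function.update_of_ne hlj, Function.update_of_ne hli']

lemma sum_two_update {i j : Fin n} (hij : j ≠ i) (z : Fin n → ℝ) (a b : ℝ) :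
    ∑ l, Function.update (Function.update z i a) j b l
      = a + (b + ∑ l ∈ (Finset.univ.erase i).erase j, z l) := by
  have hj : j ∈ Finset.univ.erase i := Finset.mem_erase.2 ⟨hij, Finset.mem_univ j⟩
  rw [← Finset.add_sum_erase Finset.univ _ (Finset.mem_univ i)]
  rw [← Finset.add_sum_erase (Finset.univ.erase i) _ hj]
  congr 1
  · rw [Function.update_of_ne (Ne.symm hij), Function.update_self]
  congr 1
  · rw [Function.update_self]
  apply Finset.sum_congr rfl
  intro l hl
  obtain ⟨hlj, hli⟩ := Finset.mem_erase.1 hl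
  obtain ⟨hli', _⟩ := Finset.mem_erase.1 hli
  rw [Function.update_of_ne hlj, Function.update_of_ne hli']

lemma sin_smoothing (K a b : ℝ) :
    Real.sin (K * ((a+b)/2)) * Real.sin (K * ((a+b)/2))
      = Real.sin (K*a) * Real.sin (K*b)
        + Real.sin (K * (|a-b|/2)) * Real.sin (K * (|a-b|/2)) := by
  have h1 : ∀ u : ℝ, Real.sin u * Real.sin u = (Real.cos (u - u) - Real.cos (u+u))/2 :=
    fun u => sin_mul_sin u u
  have h2 : Real.sin (K * (|a-b|/2)) * Real.sin (K * (|a-b|/2))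
      = Real.sin (K * ((a-b)/2)) * Real.sin (K * ((a-b)/2)) := by
    rcases abs_cases (a-b) with ⟨hq, _⟩ | ⟨hq, _⟩
    · rw [hq]
    · rw [hq]
      rw [show K * (-(a-b)/2) = -(K*((a-b)/2)) by ring, Real.sin_neg]
      ring
  rw [h2, h1, h1, sin_mul_sin]
  rw [show K * ((a+b)/2) - K * ((a+b)/2) = 0 by ring,
    show K * ((a+b)/2) + K * ((a+b)/2) = K*a + K*b by ring,
    show K * ((a-b)/2) - K * ((a-b)/2) = 0 by ring,
    show K * ((a-b)/2) + K * ((a-b)/2) = K*a - K*b by ring]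
  ring

theorem regular_maximizes_core (hn : 4 ≤ n) (P : ℝ)
    (x : Fin n → ℝ) (hx : ∀ i, x i ∈ Set.Icc 0 π) (hsum : ∑ i, x i = P) :
    Sfun n x ≤ Sfun n (fun _ => P / n) := by
  have hπ : 0 < π := Real.pi_pos
  set K : Set (Fin n → ℝ) := {y | (∀ i, y i ∈ Set.Icc 0 π) ∧ ∑ i, y i = P} with hKdef
  have hKc : IsCompact K := by
    have h1 : K = (Set.pi Set.univ (fun _ : Fin n => Set.Icc (0:ℝ) π))
        ∩ {y | ∑ i, y i = P} := by
      ext y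
      simp only [hKdef, Set.mem_setOf_eq, Set.mem_inter_iff, Set.mem_pi, Set.mem_univ,
        forall_true_left, true_implies]
    rw [h1]
    apply IsCompact.inter_right (isCompact_univ_pi (fun _ => isCompact_Icc))
    exact isClosed_eq (continuous_finset_sum _ (fun i _ => continuous_apply i)) continuous_const
  have hxK : x ∈ K := ⟨hx, hsum⟩
  have hScont : Continuous (Sfun n) := continuous_Sfun hn
  obtain ⟨z0, hz0K, hz0max⟩ := hKc.exists_isMaxOn ⟨x, hxK⟩ hScont.continuousOn
  set A : Set (Fin n → ℝ) := K ∩ {y | Sfun n y = Sfun n z0} with hAdef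
  have hAc : IsCompact A := hKc.inter_right (isClosed_eq hScont continuous_const)
  have hAne : A.Nonempty := ⟨z0, hz0K, rfl⟩
  have hVcont : Continuous (fun y : Fin n → ℝ => ∑ i, (y i)^2) :=
    continuous_finset_sum _ (fun i _ => ((continuous_apply i).pow 2))
  obtain ⟨z, hzA, hzmin⟩ := hAc.exists_isMinOn hAne hVcont.continuousOn
  obtain ⟨⟨hzIcc, hzsum⟩, hzmax⟩ := hzA
  -- z is constant
  have hconst : ∀ i j, z i = z j := by
    by_contra hne
    push_neg at hne
    obtain ⟨i, j, hij⟩ := hne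
    have hji : j ≠ i := fun h => hij (by rw [h])
    set m := (z i + z j)/2 with hm
    set d := |z i - z j|/2 with hd
    set w := Function.update (Function.update z i m) j m with hw
    set v := Function.update (Function.update z i d) j d with hv
    have hiIcc := hzIcc i
    have hjIcc := hzIcc j
    have hmIcc : m ∈ Set.Icc 0 π := by
      constructor
      · have := hiIcc.1; have := hjIcc.1; rw [hm]; linarith
      · have := hiIcc.2; have := hjIcc.2; rw [hm]; linarith
    have hdIcc : d ∈ Set.Icc 0 π := by
      constructor
      · rw [hd]; positivity
      · rw [hd]
        have : |z i - z j| ≤ π := by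
          rw [abs_le]
          constructor
          · have := hiIcc.1; have := hjIcc.2; linarith
          · have := hiIcc.2; have := hjIcc.1; linarith
        linarith
    have hwK : w ∈ K := by
      constructor
      · intro l
        rw [hw]
        rcases Classical.em (l = j) with rfl | hlj
        · rw [Function.update_self]; exact hmIcc
        · rw [Function.update_of_ne hlj]
          rcases Classical.em (l = i) with rfl | hli
          · rw [Function.update_self]; exact hmIcc
          · rw [Function.update_of_ne hli]; exact hzIcc l
      · rw [hw, sum_two_update hji]
        rw [← hzsum, ← Finset.add_sum_erase Finset.univ _ (Finset.mem_univ i),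
          ← Finset.add_sum_erase (Finset.univ.erase i) _
            (Finset.mem_erase.2 ⟨hji, Finset.mem_univ j⟩)]
        rw [hm]; ring
    -- smoothing identity : Sfun w = Sfun z + Sfun v
    have hsplit : Sfun n w = Sfun n z + Sfun n v := by
      rw [Sfun, Sfun, Sfun]
      rw [← Summable.tsum_add (summable_Sfun z hn) (summable_Sfun v hn)]
      apply tsum_congr
      intro k
      have e1 := prod_two_update hji z m m (fun y => Real.sin (((k:ℝ)+1)*y))
      have e2 := prod_two_update hji z d d (fun y => Real.sin (((k:ℝ)+1)*y))
      have e3 : ∏ l, Real.sin (((k:ℝ)+1) * z l)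
          = Real.sin (((k:ℝ)+1) * z i) * (Real.sin (((k:ℝ)+1) * z j)
            * ∏ l ∈ (Finset.univ.erase i).erase j, Real.sin (((k:ℝ)+1) * z l)) := by
        rw [← Finset.mul_prod_erase Finset.univ _ (Finset.mem_univ i),
          ← Finset.mul_prod_erase (Finset.univ.erase i) _
            (Finset.mem_erase.2 ⟨hji, Finset.mem_univ j⟩)]
      have hkey := sin_smoothing ((k:ℝ)+1) (z i) (z j)
      rw [← hm, ← hd] at hkey
      rw [hw, hv, e1, e2, e3]
      rw [← add_div]
      congr 1
      rw [← mul_assoc, ← mul_assoc, ← mul_assoc, hkey]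
      ring
    have hvnonneg : 0 ≤ Sfun n v := by
      apply lemA_fin hn
      intro l
      rw [hv]
      rcases Classical.em (l = j) with rfl | hlj
      · rw [Function.update_self]; exact hdIcc
      · rw [Function.update_of_ne hlj]
        rcases Classical.em (l = i) with rfl | hli
        · rw [Function.update_self]; exact hdIcc
        · rw [Function.update_of_ne hli]; exact hzIcc l
    have hwle : Sfun n w ≤ Sfun n z0 := hz0max hwK
    have hweq : Sfun n w = Sfun n z0 := by
      have h1 : Sfun n z0 ≤ Sfun n w := by rw [hsplit, ← hzmax]; linarith
      linarith
    have hwA : w ∈ A := ⟨hwK, hweq⟩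
    have hmin := hzmin hwA
    -- variance strictly decreases
    have hVlt : ∑ l, (w l)^2 < ∑ l, (z l)^2 := by
      have ew : ∑ l, (w l)^2 = m^2 + (m^2 + ∑ l ∈ (Finset.univ.erase i).erase j, (z l)^2) := by
        rw [hw]
        have := sum_two_update (n := n) hji (fun l => (z l)^2) (m^2) (m^2)
        rw [← this]
        apply Finset.sum_congr rfl
        intro l _
        rcases Classical.em (l = j) with rfl | hlj
        · rw [Function.update_self, Function.update_self]
        · rw [Function.update_of_ne hlj, Function.update_of_ne hlj]
          rcases Classical.em (l = i) with rfl | hli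
          · rw [Function.update_self, Function.update_self]
          · rw [Function.update_of_ne hli, Function.update_of_ne hli]
      have ez : ∑ l, (z l)^2 = (z i)^2 + ((z j)^2 + ∑ l ∈ (Finset.univ.erase i).erase j, (z l)^2) := by
        rw [← Finset.add_sum_erase Finset.univ _ (Finset.mem_univ i),
          ← Finset.add_sum_erase (Finset.univ.erase i) _
            (Finset.mem_erase.2 ⟨hji, Finset.mem_univ j⟩)]
      rw [ew, ez, hm]
      have : (z i - z j)^2 > 0 := by
        have := sub_ne_zero.2 hij
        positivity
      nlinarith
    have := hmin
    rw [isMinOn_iff] at hzmin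
    have := hzmin w hwA
    linarith
  -- hence z is the constant vector P/n
  have hn0 : (0:ℝ) < n := by positivity
  have hzval : ∀ l, z l = P / n := by
    intro l
    have : ∑ i, z i = n * z l := by
      rw [Finset.sum_congr rfl (fun i _ => hconst i l)]
      rw [Finset.sum_const, Finset.card_univ, Fintype.card_fin, nsmul_eq_mul]
    rw [hzsum] at this
    field_simp
    linarith
  have hzfun : z = (fun _ => P / n) := funext hzval
  calc Sfun n x ≤ Sfun n z0 := hz0max hxK
    _ = Sfun n z := hzmax.symm
    _ = Sfun n (fun _ => P / n) := by rw [hzfun]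
end
end AuxPolygonVolume

theorem regular_maximizes_fixed_perimeter (n : ℕ) (hn : 4 ≤ n) (P : ℝ)
    (hP : 0 < P) (hP' : P < n * π) (x : Fin n → ℝ)
    (hx : ∀ i, 0 < x i ∧ x i < π) (hsum : ∑ i, x i = P) :
    ∑' k : ℕ, (∏ i, Real.sin (((k : ℝ) + 1) * x i)) / ((k : ℝ) + 1) ^ (n - 2) ≤
      ∑' k : ℕ, (Real.sin (((k : ℝ) + 1) * P / n)) ^ n / ((k : ℝ) + 1) ^ (n - 2) := by
  have hxIcc : ∀ i, x i ∈ Set.Icc 0 π := fun i => ⟨le_of_lt (hx i).1, le_of_lt (hx i).2⟩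
  have hcore := regular_maximizes_core hn P x hxIcc hsum
  have hL : Sfun n x = ∑' k : ℕ, (∏ i, Real.sin (((k : ℝ) + 1) * x i)) / ((k : ℝ) + 1) ^ (n - 2) :=
    rfl
  have hR : Sfun n (fun _ => P / n)
      = ∑' k : ℕ, (Real.sin (((k : ℝ) + 1) * P / n)) ^ n / ((k : ℝ) + 1) ^ (n - 2) := by
    apply tsum_congr
    intro k
    congr 1
    rw [Finset.prod_const, Finset.card_univ, Fintype.card_fin, mul_div_assoc]
  rw [← hL, ← hR]
  exact hcore
end
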